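/- arXiv:1601.05468 — 5 statements merged into one kernel-verified Lean document; each statement's English description precedes it below -/
import Mathlib

section
/- For every real r > 0, the closure of the coamoeba of f(z_1, z_2) = 1 + z_1 + z_2 − r·z_1 z_2 has Haar measure exactly 2π² in T² = (ℝ/2πℤ)². -/
open MeasureTheory Complex

noncomputable section

instance : Fact (0 < 2 * Real.pi) := ⟨by positivity⟩

/-- The real `n`-torus `(ℝ/2πℤ)ⁿ`, carrying the Haar measure of total mass `(2π)ⁿ`. -/
abbrev Torus (n : ℕ) := Fin n → AddCircle (2 * Real.pi)

/-- Projection `ℝⁿ → Tⁿ`. -/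
def toTorus {n : ℕ} (θ : Fin n → ℝ) : Torus n := fun i => (θ i : AddCircle (2 * Real.pi))

/-- The Laurent monomial `z ↦ z^a`. -/
def lmon {n : ℕ} (a : Fin n → ℤ) (z : Fin n → ℂ) : ℂ := ∏ i, z i ^ a i

/-- Evaluation of `Σ_k f_k z^{a_k}`. -/
def evalPoly {n N : ℕ} (a : Fin N → Fin n → ℤ) (f : Fin N → ℂ) (z : Fin n → ℂ) : ℂ :=
  ∑ k, f k * lmon (a k) z

/-- The coamoeba of a function `F` on `(ℂ∖{0})ⁿ`: the image of its zero set under the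
componentwise argument mapping, viewed in the torus `(ℝ/2πℤ)ⁿ`. -/
def coamoebaF {n : ℕ} (F : (Fin n → ℂ) → ℂ) : Set (Torus n) :=
  { θ | ∃ z : Fin n → ℂ, (∀ i, z i ≠ 0) ∧ F z = 0 ∧ θ = toTorus fun i => (z i).arg }

/-- The coamoeba of `Σ_k f_k z^{a_k}`. -/
def coamoeba {n N : ℕ} (a : Fin N → Fin n → ℤ) (f : Fin N → ℂ) : Set (Torus n) :=
  coamoebaF (evalPoly a f)

/-- The matrix `Â` with `k`-th column `(1, a_k)`. -/
def hatA {n : ℕ} (a : Fin (n + 2) → Fin n → ℤ) : Matrix (Fin (n + 1)) (Fin (n + 2)) ℤ :=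
  fun i k => Fin.cases 1 (fun i' => a k i') i

/-- The Gale dual `b_k = (−1)^k det(A_k)`, where `A_k` is `Â` with column `k` deleted. -/
def galeB {n : ℕ} (a : Fin (n + 2) → Fin n → ℤ) (k : Fin (n + 2)) : ℤ :=
  (-1) ^ (k : ℕ) * Matrix.det (Matrix.of fun i j => hatA a i (k.succAbove j))

/-- A nondegenerate circuit: all maximal minors of `Â` are nonvanishing, i.e. every
`n+1` of the `n+2` points affinely span `ℝⁿ`. -/
def NondegCircuit {n : ℕ} (a : Fin (n + 2) → Fin n → ℤ) : Prop :=
  ∀ k, galeB a k ≠ 0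

/-- The normalized volume `Vol(A) = Σ_{k : b_k > 0} b_k`. -/
def volA {n : ℕ} (a : Fin (n + 2) → Fin n → ℤ) : ℤ :=
  ∑ k ∈ Finset.univ.filter (fun k => 0 < galeB a k), galeB a k

/-- The `A`-discriminant binomial associated to a Gale dual vector `b`:
`Δ(x) = Π_{b_k>0} b_k^{b_k} · Π_{b_k<0} x_k^{−b_k} − Π_{b_k<0} b_k^{−b_k} · Π_{b_k>0} x_k^{b_k}`. -/
def discA {n : ℕ} {K : Type*} [Field K] (b : Fin (n + 2) → ℤ) (x : Fin (n + 2) → K) : K :=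
  (∏ k ∈ Finset.univ.filter (fun k => 0 < b k), (b k : K) ^ b k) *
    (∏ k ∈ Finset.univ.filter (fun k => b k < 0), x k ^ (-b k)) -
  (∏ k ∈ Finset.univ.filter (fun k => b k < 0), (b k : K) ^ (-b k)) *
    (∏ k ∈ Finset.univ.filter (fun k => 0 < b k), x k ^ b k)

/-- `f̂(θ) = (c/|c|)·e^{i⟨a,θ⟩}` for a monomial with coefficient `c` and exponent `a`. -/
def fhat {n : ℕ} (a : Fin n → ℤ) (c : ℂ) (θ : Fin n → ℝ) : ℂ :=
  (c / (‖c‖ : ℂ)) * Complex.exp ((∑ i, (a i : ℝ) * θ i) * Complex.I)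

/-- Colopsidedness of `Σ_{k ∈ s} f_k z^{a_k}` at `θ`: all rotated coefficients can be turned
into the closed right half plane, with at least one in the open right half plane. -/
def ColopsidedOn {n N : ℕ} (a : Fin N → Fin n → ℤ) (f : Fin N → ℂ) (s : Finset (Fin N))
    (θ : Fin n → ℝ) : Prop :=
  ∃ φ : ℝ,
    (∀ k ∈ s, 0 ≤ (Complex.exp (φ * Complex.I) * f k *
      Complex.exp ((∑ i, (a k i : ℝ) * θ i) * Complex.I)).re) ∧
    ∃ k ∈ s, 0 < (Complex.exp (φ * Complex.I) * f k *
      Complex.exp ((∑ i, (a k i : ℝ) * θ i) * Complex.I)).re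

/-- A list of monomials (coefficient-exponent pairs) is real at `θ` if all the rotated
coefficients lie on one real line through the origin of `ℂ`. -/
def RealAtMons {n : ℕ} (mons : List (ℂ × (Fin n → ℤ))) (θ : Fin n → ℝ) : Prop :=
  ∃ w : ℂ, w ≠ 0 ∧ ∀ m ∈ mons, ∃ t : ℝ,
    m.1 * Complex.exp ((∑ i, (m.2 i : ℝ) * θ i) * Complex.I) = (t : ℂ) * w

/-- `Σ_k f_k z^{a_k}` is real at `θ` if all the numbers `f_k e^{i⟨a_k,θ⟩}` lie on one
real line through the origin of `ℂ`. -/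
def RealAtIdx {n N : ℕ} (a : Fin N → Fin n → ℤ) (f : Fin N → ℂ) (θ : Fin n → ℝ) : Prop :=
  ∃ w : ℂ, w ≠ 0 ∧ ∀ k, ∃ t : ℝ,
    f k * Complex.exp ((∑ i, (a k i : ℝ) * θ i) * Complex.I) = (t : ℂ) * w

/-- Arguments of critical points of `Σ f_k z^{a_k}`: points of the torus that are
componentwise arguments of some `z ∈ (ℂ∖{0})ⁿ` with `z_j·∂_j f(z) = 0` for all `j`. -/
def critArgs {n N : ℕ} (a : Fin N → Fin n → ℤ) (f : Fin N → ℂ) : Set (Torus n) :=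
  { θ | ∃ z : Fin n → ℂ, (∀ i, z i ≠ 0) ∧
      (∀ j, (∑ k, (a k j : ℂ) * f k * lmon (a k) z) = 0) ∧ θ = toTorus fun i => (z i).arg }

/-- The first polynomial `F₁(z) = f₁ z^{a_0} + z^{a_2} + f₂ z^{a_3}` of a circuit system,
with `f = (f₁, f₂, f₃, f₄)`. -/
def sysF1 (a : Fin 4 → Fin 2 → ℤ) (f : Fin 4 → ℂ) (z : Fin 2 → ℂ) : ℂ :=
  f 0 * lmon (a 0) z + lmon (a 2) z + f 1 * lmon (a 3) z

/-- The second polynomial `F₂(z) = f₃ z^{a_1} + z^{a_2} + f₄ z^{a_3}` of a circuit system,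
with `f = (f₁, f₂, f₃, f₄)`. -/
def sysF2 (a : Fin 4 → Fin 2 → ℤ) (f : Fin 4 → ℂ) (z : Fin 2 → ℂ) : ℂ :=
  f 2 * lmon (a 1) z + lmon (a 2) z + f 3 * lmon (a 3) z

/-- The real points of a lattice configuration, as a subset of `ℝⁿ`. -/
def realPts {n N : ℕ} (a : Fin N → Fin n → ℤ) : Set (Fin n → ℝ) :=
  Set.range fun k => fun i => (a k i : ℝ)

end


section CoamoebaProof

open MeasureTheory Complex Set

lemma coeInj {u v : ℝ} (hu : u ∈ Set.Ioc (-Real.pi) Real.pi)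
    (hv : v ∈ Set.Ioc (-Real.pi) Real.pi)
    (h : (u : AddCircle (2 * Real.pi)) = v) : u = v := by
  have h2 : (u - v : ℝ) ∈ AddSubgroup.zmultiples (2 * Real.pi) :=
    (QuotientAddGroup.eq_iff_sub_mem).1 h
  obtain ⟨k, hk⟩ := h2
  have hpi := Real.pi_pos
  have hk' : (k : ℝ) * (2 * Real.pi) = u - v := by simpa [zsmul_eq_mul] using hk
  rcases lt_trichotomy k 0 with h'|h'|h'
  · have : (k : ℝ) ≤ -1 := by exact_mod_cast (by omega : k ≤ -1)
    nlinarith [hu.2, hv.1, hu.1, hv.2]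
  · rw [h'] at hk'; simp at hk'; linarith
  · have : (1 : ℝ) ≤ (k : ℝ) := by exact_mod_cast (by omega : 1 ≤ k)
    nlinarith [hu.2, hv.1, hu.1, hv.2]

def Ppos : Set (AddCircle (2 * Real.pi)) := ((↑) : ℝ → AddCircle (2 * Real.pi)) '' Set.Ioo 0 Real.pi
def Pneg : Set (AddCircle (2 * Real.pi)) := ((↑) : ℝ → AddCircle (2 * Real.pi)) '' Set.Ioo (-Real.pi) 0

lemma isOpen_Ppos : IsOpen Ppos := QuotientAddGroup.isOpenMap_coe _ isOpen_Ioo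
lemma isOpen_Pneg : IsOpen Pneg := QuotientAddGroup.isOpenMap_coe _ isOpen_Ioo

lemma im_pos_of_mem_Ppos {z : ℂ} (hz : z ≠ 0)
    (h : ((z.arg : ℝ) : AddCircle (2 * Real.pi)) ∈ Ppos) : 0 < z.im := by
  obtain ⟨v, hv, hveq⟩ := h
  have hv' : v = z.arg := coeInj ⟨by linarith [hv.1, Real.pi_pos], hv.2.le⟩ (Complex.arg_mem_Ioc z) hveq
  have hs : 0 < Real.sin z.arg := hv' ▸ Real.sin_pos_of_pos_of_lt_pi hv.1 hv.2
  have := Complex.norm_mul_sin_arg z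
  nlinarith [norm_pos_iff.mpr hz, this]

lemma im_neg_of_mem_Pneg {z : ℂ} (hz : z ≠ 0)
    (h : ((z.arg : ℝ) : AddCircle (2 * Real.pi)) ∈ Pneg) : z.im < 0 := by
  obtain ⟨v, hv, hveq⟩ := h
  have hv' : v = z.arg := coeInj ⟨by linarith [hv.1], by linarith [hv.2, Real.pi_pos]⟩
    (Complex.arg_mem_Ioc z) hveq
  have hs : Real.sin z.arg < 0 := hv' ▸ Real.sin_neg_of_neg_of_neg_pi_lt hv.2 hv.1
  have := Complex.norm_mul_sin_arg z
  nlinarith [norm_pos_iff.mpr hz, this]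

lemma Ppos_disj_Pneg : Ppos ∩ Pneg = ∅ := by
  ext w
  simp only [Set.mem_inter_iff, Set.mem_empty_iff_false, iff_false, not_and, Ppos, Pneg]
  rintro ⟨u, hu, rfl⟩ ⟨v, hv, hveq⟩
  have : v = u := coeInj ⟨by linarith [hv.1], by linarith [hv.2, Real.pi_pos]⟩
    ⟨by linarith [hu.1, Real.pi_pos], hu.2.le⟩ hveq
  rw [this] at hv
  linarith [hu.1, hv.2]

lemma vol_img {a b : ℝ} (hab : a ≤ b) (h : Set.Ioo a b ⊆ Set.Ioc (-Real.pi) Real.pi) :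
    volume (((↑) : ℝ → AddCircle (2 * Real.pi)) '' Set.Ioo a b) = ENNReal.ofReal (b - a) := by
  have hmeas : MeasurableSet (((↑) : ℝ → AddCircle (2 * Real.pi)) '' Set.Ioo a b) :=
    (QuotientAddGroup.isOpenMap_coe _ isOpen_Ioo).measurableSet
  rw [AddCircle.add_projection_respects_measure (T := 2 * Real.pi) (-Real.pi) hmeas]
  have hIoc : -Real.pi + 2 * Real.pi = Real.pi := by ring
  rw [hIoc]
  have hset : (QuotientAddGroup.mk ⁻¹' (((↑) : ℝ → AddCircle (2 * Real.pi)) '' Set.Ioo a b)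
      ∩ Set.Ioc (-Real.pi) Real.pi) = Set.Ioo a b := by
    ext u
    constructor
    · rintro ⟨⟨v, hv, hveq⟩, hu⟩
      have : v = u := coeInj (h hv) hu hveq
      rwa [← this]
    · intro hu
      exact ⟨⟨u, hu, rfl⟩, h hu⟩
  rw [hset, Real.volume_Ioo]

lemma no_same_sign {r : ℝ} (hr : 0 < r) {z0 z1 : ℂ}
    (h : 1 + z0 + z1 - (r : ℂ) * (z0 * z1) = 0) :
    ¬(0 < z0.im ∧ 0 < z1.im) ∧ ¬(z0.im < 0 ∧ z1.im < 0) := by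
  have h1 : 1 + z0.re + z1.re - r * (z0.re * z1.re - z0.im * z1.im) = 0 := by
    have := congrArg Complex.re h
    simpa using this
  have h2 : z0.im + z1.im - r * (z0.re * z1.im + z0.im * z1.re) = 0 := by
    have := congrArg Complex.im h
    simpa using this
  have key : z1.im * ((r * z0.re - 1) ^ 2 + (r * z0.im) ^ 2) = -(r + 1) * z0.im := by
    linear_combination (-(r * z0.re - 1)) * h2 + (r * z0.im) * h1
  constructor
  · rintro ⟨hb, hd⟩
    nlinarith [sq_nonneg (r * z0.re - 1), sq_nonneg (r * z0.im)]
  · rintro ⟨hb, hd⟩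
    nlinarith [sq_nonneg (r * z0.re - 1), sq_nonneg (r * z0.im)]

lemma construct {r x y : ℝ} (hr : 0 < r) (hx : x ∈ Set.Ioo (-Real.pi) 0)
    (hy : y ∈ Set.Ioo 0 Real.pi) :
    ∃ z0 z1 : ℂ, z0 ≠ 0 ∧ z1 ≠ 0 ∧ 1 + z0 + z1 - (r : ℂ) * (z0 * z1) = 0 ∧
      z0.arg = x ∧ z1.arg = y := by
  have hpi := Real.pi_pos
  have hsx : Real.sin x < 0 := Real.sin_neg_of_neg_of_neg_pi_lt hx.2 hx.1
  have hsy : 0 < Real.sin y := Real.sin_pos_of_pos_of_lt_pi hy.1 hy.2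
  set ex : ℂ := Complex.exp ((x : ℂ) * Complex.I) with hex
  set H : ℝ → ℝ := fun t =>
    (Complex.exp (((-y : ℝ) : ℂ) * Complex.I) *
      ((1 + (t : ℂ) * ex) * (starRingEnd ℂ) ((r : ℂ) * ((t : ℂ) * ex) - 1))).im with hHdef
  have hH : ∀ t : ℝ, H t = Real.sin y - r * t ^ 2 * Real.sin y
      - r * t * (Real.sin x * Real.cos y + Real.cos x * Real.sin y)
      - t * (Real.sin x * Real.cos y - Real.cos x * Real.sin y) := by
    intro t
    simp only [hHdef, hex, Complex.exp_mul_I, ← Complex.ofReal_cos, ← Complex.ofReal_sin,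
      Real.cos_neg, Real.sin_neg, map_sub, map_one, map_mul, Complex.conj_ofReal,
      Complex.conj_I, map_add, Complex.mul_im, Complex.mul_re, Complex.add_re, Complex.add_im,
      Complex.sub_re, Complex.sub_im, Complex.one_re, Complex.one_im, Complex.ofReal_re,
      Complex.ofReal_im, Complex.I_re, Complex.I_im, Complex.neg_re, Complex.neg_im]
    ring_nf
    linear_combination (-(Real.sin y * t ^ 2 * r)) * Real.sin_sq_add_cos_sq x
  have hcont : Continuous H := by
    have h1 : Continuous fun t : ℝ => (r : ℂ) * ((t : ℂ) * ex) - 1 := by fun_prop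
    exact Complex.continuous_im.comp
      (continuous_const.mul ((continuous_const.add
        (Complex.continuous_ofReal.mul continuous_const)).mul (continuous_star.comp h1)))
  have hH0 : H 0 = Real.sin y := by rw [hH]; ring
  set T : ℝ := (r + 2) / (r * Real.sin y) + (r + 2) with hTdef
  have hT0 : 0 < T := by positivity
  have hHT : H T < 0 := by
    rw [hH]
    have hA : |Real.sin x * Real.cos y + Real.cos x * Real.sin y| ≤ 1 := by
      rw [← Real.sin_add]; exact Real.abs_sin_le_one _
    have hB : |Real.sin x * Real.cos y - Real.cos x * Real.sin y| ≤ 1 := by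
      rw [← Real.sin_sub]; exact Real.abs_sin_le_one _
    have hsy1 : Real.sin y ≤ 1 := Real.sin_le_one y
    have hT1 : r * Real.sin y * T = (r + 2) + r * Real.sin y * (r + 2) := by
      rw [hTdef]; field_simp
    have habs1 := abs_le.1 hA
    have habs2 := abs_le.1 hB
    nlinarith [mul_pos hr hsy, mul_pos (mul_pos hr hsy) hT0, sq_nonneg T,
      mul_le_mul_of_nonneg_left habs1.2 (le_of_lt (mul_pos hr hT0)),
      mul_le_mul_of_nonneg_left habs2.2 hT0.le,
      mul_le_mul_of_nonneg_left habs1.1 (le_of_lt (mul_pos hr hT0)),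
      mul_le_mul_of_nonneg_left habs2.1 hT0.le]
  -- IVT
  obtain ⟨t₀, ht₀mem, ht₀⟩ : ∃ t₀ ∈ Set.Icc 0 T, H t₀ = 0 := by
    have := intermediate_value_Icc' hT0.le hcont.continuousOn (a := 0) (b := T)
    have h0mem : (0 : ℝ) ∈ Set.Icc (H T) (H 0) := ⟨hHT.le, by rw [hH0]; exact hsy.le⟩
    obtain ⟨t₀, ht₀mem, ht₀⟩ := this h0mem
    exact ⟨t₀, ht₀mem, ht₀⟩
  have ht₀pos : 0 < t₀ := by
    rcases ht₀mem.1.lt_or_eq with h | h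
    · exact h
    · exfalso; rw [← h] at ht₀; rw [hH0] at ht₀; linarith
  -- construct the point
  set z0 : ℂ := (t₀ : ℂ) * ex with hz0def
  have hz0re : z0.re = t₀ * Real.cos x := by
    simp [hz0def, hex, Complex.exp_mul_I, ← Complex.ofReal_cos, ← Complex.ofReal_sin,
      Complex.mul_re, Complex.add_re, Complex.mul_im]
  have hz0im : z0.im = t₀ * Real.sin x := by
    simp [hz0def, hex, Complex.exp_mul_I, ← Complex.ofReal_cos, ← Complex.ofReal_sin,
      Complex.mul_re, Complex.add_im, Complex.mul_im]
  set D : ℂ := (r : ℂ) * z0 - 1 with hDdef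
  have hDim : D.im = r * (t₀ * Real.sin x) := by
    simp [hDdef, Complex.sub_im, Complex.mul_im, hz0im, hz0re]
  have hDimneg : D.im < 0 := by
    rw [hDim]; have := mul_pos ht₀pos (neg_pos.2 hsx); nlinarith
  have hD : D ≠ 0 := by
    intro h0
    rw [h0] at hDimneg; simp at hDimneg
  set z1 : ℂ := (1 + z0) / D with hz1def
  have hz0ne : z0 ≠ 0 := by
    rw [hz0def]
    exact mul_ne_zero (by exact_mod_cast ht₀pos.ne') (Complex.exp_ne_zero _)
  have hfz : 1 + z0 + z1 - (r : ℂ) * (z0 * z1) = 0 := by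
    rw [hz1def]
    field_simp
    rw [hDdef]; ring
  -- imaginary part of z1 is positive
  have hnsq : 0 < Complex.normSq D := Complex.normSq_pos.2 hD
  have hz1im : z1.im = (-(1 + r) * (t₀ * Real.sin x)) / Complex.normSq D := by
    rw [hz1def, Complex.div_im]
    rw [Complex.add_im, Complex.add_re, Complex.one_re, Complex.one_im, hz0re, hz0im]
    rw [hDdef]
    simp only [Complex.sub_re, Complex.sub_im, Complex.mul_re, Complex.mul_im,
      Complex.ofReal_re, Complex.ofReal_im, Complex.one_re, Complex.one_im, hz0re, hz0im]
    field_simp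
    ring
  have hz1impos : 0 < z1.im := by
    rw [hz1im]
    apply div_pos _ hnsq
    have := mul_pos ht₀pos (neg_pos.2 hsx)
    nlinarith
  have hz1ne : z1 ≠ 0 := by
    intro h0; rw [h0] at hz1impos; simp at hz1impos
  -- the rotated z1 is real
  have hmulconj : D * (starRingEnd ℂ) D = (Complex.normSq D : ℂ) := Complex.mul_conj D
  have hrot : Complex.exp (((-y : ℝ) : ℂ) * Complex.I) * z1 =
      (Complex.exp (((-y : ℝ) : ℂ) * Complex.I) *
        ((1 + z0) * (starRingEnd ℂ) D)) / (Complex.normSq D : ℂ) := by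
    rw [hz1def]
    rw [eq_div_iff (by exact_mod_cast (Complex.normSq_pos.2 hD).ne' : (Complex.normSq D : ℂ) ≠ 0)]
    rw [← hmulconj]
    field_simp
  have hrotim : (Complex.exp (((-y : ℝ) : ℂ) * Complex.I) * z1).im = 0 := by
    rw [hrot]
    have : ((Complex.normSq D : ℝ) : ℂ) = (Complex.normSq D : ℂ) := rfl
    rw [← this, Complex.div_ofReal_im]
    have hnum : (Complex.exp (((-y : ℝ) : ℂ) * Complex.I) * ((1 + z0) * (starRingEnd ℂ) D)).im
        = H t₀ := by
      rfl
    rw [hnum, ht₀]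
    simp
  set s : ℝ := (Complex.exp (((-y : ℝ) : ℂ) * Complex.I) * z1).re with hsdef
  have hseq : Complex.exp (((-y : ℝ) : ℂ) * Complex.I) * z1 = (s : ℂ) := by
    apply Complex.ext
    · simp [hsdef]
    · rw [hrotim]; simp
  have hz1eq : z1 = (s : ℂ) * Complex.exp ((y : ℂ) * Complex.I) := by
    have h1 : Complex.exp ((y : ℂ) * Complex.I) * (Complex.exp (((-y : ℝ) : ℂ) * Complex.I) * z1)
        = z1 := by
      rw [← mul_assoc, ← Complex.exp_add]
      have : (y : ℂ) * Complex.I + ((-y : ℝ) : ℂ) * Complex.I = 0 := by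
        push_cast; ring
      rw [this, Complex.exp_zero, one_mul]
    rw [← h1, hseq]; ring
  have hz1im2 : z1.im = s * Real.sin y := by
    rw [hz1eq]
    simp [Complex.exp_mul_I, ← Complex.ofReal_cos, ← Complex.ofReal_sin, Complex.mul_im]
  have hspos : 0 < s := by
    rw [hz1im2] at hz1impos
    nlinarith
  have harg1 : z1.arg = y := by
    rw [hz1eq, Complex.exp_mul_I]
    rw [Complex.arg_real_mul _ hspos]
    exact Complex.arg_cos_add_sin_mul_I ⟨by linarith [hy.1], hy.2.le⟩
  have harg0 : z0.arg = x := by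
    rw [hz0def, hex, Complex.exp_mul_I]
    rw [Complex.arg_real_mul _ ht₀pos]
    exact Complex.arg_cos_add_sin_mul_I ⟨hx.1, by linarith [hx.2]⟩
  exact ⟨z0, z1, hz0ne, hz1ne, hfz, harg0, harg1⟩


lemma vol_rect (A B : Set (AddCircle (2 * Real.pi))) :
    volume {θ : Torus 2 | θ 0 ∈ A ∧ θ 1 ∈ B} = volume A * volume B := by
  have hset : {θ : Torus 2 | θ 0 ∈ A ∧ θ 1 ∈ B} = Set.pi Set.univ ![A, B] := by
    ext θ
    simp [Set.mem_pi, Fin.forall_fin_two]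
  rw [hset, volume_pi_pi]
  simp [Fin.prod_univ_two]

lemma vol_Ppos : volume Ppos = ENNReal.ofReal Real.pi := by
  have := vol_img (a := 0) (b := Real.pi) Real.pi_pos.le
    (fun u hu => ⟨by linarith [hu.1, Real.pi_pos], hu.2.le⟩)
  simpa [Ppos] using this

lemma vol_Pneg : volume Pneg = ENNReal.ofReal Real.pi := by
  have := vol_img (a := -Real.pi) (b := 0) (by linarith [Real.pi_pos])
    (fun u hu => ⟨hu.1, by linarith [hu.2, Real.pi_pos]⟩)
  have h0 : (0 : ℝ) - (-Real.pi) = Real.pi := by ring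
  rw [h0] at this
  simpa [Pneg] using this

end CoamoebaProof

/-- For every real `r > 0`, the closed coamoeba of
`f(z₁,z₂) = 1 + z₁ + z₂ − r·z₁z₂` has Haar measure exactly `2π²` in `T²`. -/
theorem coamoeba_area_unit_square (r : ℝ) (hr : 0 < r) :
    volume (closure (coamoebaF fun z : Fin 2 → ℂ =>
        1 + z 0 + z 1 - (r : ℂ) * (z 0 * z 1))) =
      ENNReal.ofReal (2 * Real.pi ^ 2) := by
  classical
  set f : (Fin 2 → ℂ) → ℂ := fun z => 1 + z 0 + z 1 - (r : ℂ) * (z 0 * z 1) with hfdef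
  set Qnp : Set (Torus 2) := {θ | θ 0 ∈ Pneg ∧ θ 1 ∈ Ppos} with hQnp
  set Qpn : Set (Torus 2) := {θ | θ 0 ∈ Ppos ∧ θ 1 ∈ Pneg} with hQpn
  set Qpp : Set (Torus 2) := {θ | θ 0 ∈ Ppos ∧ θ 1 ∈ Ppos} with hQpp
  set Qnn : Set (Torus 2) := {θ | θ 0 ∈ Pneg ∧ θ 1 ∈ Pneg} with hQnn
  have hpi := Real.pi_pos
  -- openness
  have hopen : ∀ A B : Set (AddCircle (2 * Real.pi)), IsOpen A → IsOpen B →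
      IsOpen {θ : Torus 2 | θ 0 ∈ A ∧ θ 1 ∈ B} := by
    intro A B hA hB
    exact ((hA.preimage (continuous_apply (0 : Fin 2))).inter
      (hB.preimage (continuous_apply (1 : Fin 2))))
  have hQnpO := hopen _ _ isOpen_Pneg isOpen_Ppos
  have hQpnO := hopen _ _ isOpen_Ppos isOpen_Pneg
  have hQppO := hopen _ _ isOpen_Ppos isOpen_Ppos
  have hQnnO := hopen _ _ isOpen_Pneg isOpen_Pneg
  -- lower bound: the two off-diagonal squares are inside the coamoeba
  have hsub : Qnp ∪ Qpn ⊆ coamoebaF f := by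
    rintro θ (⟨⟨x, hx, hx0⟩, ⟨y, hy, hy1⟩⟩ | ⟨⟨y, hy, hy0⟩, ⟨x, hx, hx1⟩⟩)
    · obtain ⟨z0, z1, h0, h1, hf, ha0, ha1⟩ := construct hr hx hy
      refine ⟨![z0, z1], ?_, ?_, ?_⟩
      · intro i; fin_cases i <;> simpa
      · show 1 + z0 + z1 - (r : ℂ) * (z0 * z1) = 0
        exact hf
      · funext i
        fin_cases i
        · show θ 0 = ((z0.arg : ℝ) : AddCircle (2 * Real.pi))
          rw [ha0, ← hx0]
        · show θ 1 = ((z1.arg : ℝ) : AddCircle (2 * Real.pi))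
          rw [ha1, ← hy1]
    · obtain ⟨z0, z1, h0, h1, hf, ha0, ha1⟩ := construct hr hx hy
      refine ⟨![z1, z0], ?_, ?_, ?_⟩
      · intro i; fin_cases i <;> simpa
      · show 1 + z1 + z0 - (r : ℂ) * (z1 * z0) = 0
        linear_combination hf
      · funext i
        fin_cases i
        · show θ 0 = ((z1.arg : ℝ) : AddCircle (2 * Real.pi))
          rw [ha1, ← hy0]
        · show θ 1 = ((z0.arg : ℝ) : AddCircle (2 * Real.pi))
          rw [ha0, ← hx1]
  -- upper bound: coamoeba misses the two diagonal squares
  have hmiss : coamoebaF f ⊆ (Qpp ∪ Qnn)ᶜ := by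
    rintro θ ⟨z, hz, hfz, rfl⟩
    have hfz' : 1 + z 0 + z 1 - (r : ℂ) * (z 0 * z 1) = 0 := hfz
    have hns := no_same_sign hr hfz'
    rintro (⟨h0, h1⟩ | ⟨h0, h1⟩)
    · exact hns.1 ⟨im_pos_of_mem_Ppos (hz 0) h0, im_pos_of_mem_Ppos (hz 1) h1⟩
    · exact hns.2 ⟨im_neg_of_mem_Pneg (hz 0) h0, im_neg_of_mem_Pneg (hz 1) h1⟩
  -- measures of the squares
  have hπ2 : ENNReal.ofReal Real.pi * ENNReal.ofReal Real.pi
      = ENNReal.ofReal (Real.pi ^ 2) := by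
    rw [← ENNReal.ofReal_mul hpi.le]; ring_nf
  have hvQnp : volume Qnp = ENNReal.ofReal (Real.pi ^ 2) := by
    rw [hQnp, vol_rect, vol_Pneg, vol_Ppos, hπ2]
  have hvQpn : volume Qpn = ENNReal.ofReal (Real.pi ^ 2) := by
    rw [hQpn, vol_rect, vol_Ppos, vol_Pneg, hπ2]
  have hvQpp : volume Qpp = ENNReal.ofReal (Real.pi ^ 2) := by
    rw [hQpp, vol_rect, vol_Ppos, hπ2]
  have hvQnn : volume Qnn = ENNReal.ofReal (Real.pi ^ 2) := by
    rw [hQnn, vol_rect, vol_Pneg, hπ2]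
  -- disjointness
  have hPdisj := Ppos_disj_Pneg
  have hdisj1 : Disjoint Qnp Qpn := by
    rw [Set.disjoint_left]
    rintro θ ⟨h0, _⟩ ⟨h0', _⟩
    have : θ 0 ∈ Ppos ∩ Pneg := ⟨h0', h0⟩
    rw [hPdisj] at this
    exact this
  have hdisj2 : Disjoint Qpp Qnn := by
    rw [Set.disjoint_left]
    rintro θ ⟨h0, _⟩ ⟨h0', _⟩
    have : θ 0 ∈ Ppos ∩ Pneg := ⟨h0, h0'⟩
    rw [hPdisj] at this
    exact this
  have hsum : ENNReal.ofReal (Real.pi ^ 2) + ENNReal.ofReal (Real.pi ^ 2)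
      = ENNReal.ofReal (2 * Real.pi ^ 2) := by
    rw [← ENNReal.ofReal_add (by positivity) (by positivity)]; ring_nf
  have hvol_union1 : volume (Qnp ∪ Qpn) = ENNReal.ofReal (2 * Real.pi ^ 2) := by
    rw [measure_union hdisj1 hQpnO.measurableSet, hvQnp, hvQpn, hsum]
  have hvol_union2 : volume (Qpp ∪ Qnn) = ENNReal.ofReal (2 * Real.pi ^ 2) := by
    rw [measure_union hdisj2 hQnnO.measurableSet, hvQpp, hvQnn, hsum]
  -- total volume of the torus
  have hvol_univ : volume (Set.univ : Set (Torus 2)) = ENNReal.ofReal (4 * Real.pi ^ 2) := by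
    have : (Set.univ : Set (Torus 2)) = Set.pi Set.univ (fun _ => Set.univ) := by
      rw [Set.pi_univ]
    rw [this, volume_pi_pi]
    simp only [AddCircle.measure_univ, Fin.prod_univ_two]
    rw [← ENNReal.ofReal_mul (by positivity)]
    ring_nf
  -- combine
  apply le_antisymm
  · calc volume (closure (coamoebaF f)) ≤ volume (Qpp ∪ Qnn)ᶜ := by
          apply measure_mono
          exact closure_minimal hmiss (hQppO.union hQnnO).isClosed_compl
    _ = ENNReal.ofReal (2 * Real.pi ^ 2) := by
          rw [measure_compl (hQppO.union hQnnO).measurableSet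
            (by rw [hvol_union2]; exact ENNReal.ofReal_ne_top)]
          rw [hvol_union2, hvol_univ]
          rw [← ENNReal.ofReal_sub _ (by positivity)]
          ring_nf
  · calc ENNReal.ofReal (2 * Real.pi ^ 2) = volume (Qnp ∪ Qpn) := hvol_union1.symm
    _ ≤ volume (closure (coamoebaF f)) :=
          measure_mono (hsub.trans subset_closure)
end

section
/- Let A ⊂ ℤ^n be a finite set of points affinely spanning ℝ^n and let f = (f_a)_{a∈A} with all f_a ∈ ℂ∖{0}. Suppose f is real at θ_0 ∈ ℝ^n. Then f is real at θ ∈ ℝ^n if and only if θ ∈ θ_0 + πL, where L = {x ∈ ℝ^n : ⟨a − a', x⟩ ∈ ℤ for all a, a' ∈ A} is the dual lattice of the lattice generated by the differences of A. -/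
open MeasureTheory Complex

/-- If `f` is real at `θ₀`, then `f` is real at `θ` if and only if
`θ ∈ θ₀ + πL`, where `L` is the dual lattice of the lattice generated by the
differences of the support. -/
theorem realAt_iff_dual_lattice {n N : ℕ} (a : Fin N → Fin n → ℤ)
    (hinj : Function.Injective a)
    (hspan : Submodule.span ℝ
      {x : Fin n → ℝ | ∃ j k : Fin N,
        x = (fun i => (a j i : ℝ)) - fun i => (a k i : ℝ)} = ⊤)
    (f : Fin N → ℂ) (hf : ∀ k, f k ≠ 0) (θ₀ : Fin n → ℝ)
    (h0 : RealAtIdx a f θ₀) (θ : Fin n → ℝ) :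
    RealAtIdx a f θ ↔
      ∃ x : Fin n → ℝ,
        (∀ j k : Fin N, ∃ m : ℤ, (∑ i, ((a j i : ℝ) - (a k i : ℝ)) * x i) = m) ∧
        θ = θ₀ + Real.pi • x := by
  obtain ⟨w₀, hw₀, hs⟩ := h0
  have hπ : Real.pi ≠ 0 := Real.pi_ne_zero
  constructor
  · rintro ⟨w, hw, ht⟩
    refine ⟨fun i => (θ i - θ₀ i) / Real.pi, ?_, ?_⟩
    · intro j k
      obtain ⟨tj, htj⟩ := ht j
      obtain ⟨tk, htk⟩ := ht k
      obtain ⟨sj, hsj⟩ := hs j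
      obtain ⟨sk, hsk⟩ := hs k
      set uj : ℝ := ∑ i, (a j i : ℝ) * θ i with huj
      set uk : ℝ := ∑ i, (a k i : ℝ) * θ i with huk
      set vj : ℝ := ∑ i, (a j i : ℝ) * θ₀ i with hvj
      set vk : ℝ := ∑ i, (a k i : ℝ) * θ₀ i with hvk
      set d : ℝ := uj + vk - vj - uk with hd
      have e3 : Complex.exp (↑d * Complex.I) *
          (Complex.exp (↑vj * Complex.I) * Complex.exp (↑uk * Complex.I)) =
          Complex.exp (↑uj * Complex.I) * Complex.exp (↑vk * Complex.I) := by
        rw [← Complex.exp_add, ← Complex.exp_add, ← Complex.exp_add]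
        congr 1
        push_cast [hd]
        ring
      have key : Complex.exp (↑d * Complex.I) * ((sj : ℂ) * tk) * (w₀ * w) =
          ((tj : ℂ) * sk) * (w₀ * w) := by
        calc Complex.exp (↑d * Complex.I) * ((sj : ℂ) * tk) * (w₀ * w)
            = Complex.exp (↑d * Complex.I) * (((sj : ℂ) * w₀) * ((tk : ℂ) * w)) := by ring
          _ = Complex.exp (↑d * Complex.I) *
              ((f j * Complex.exp (↑vj * Complex.I)) * (f k * Complex.exp (↑uk * Complex.I))) := by
              rw [hsj, htk]
          _ = (f j * f k) * (Complex.exp (↑d * Complex.I) *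
              (Complex.exp (↑vj * Complex.I) * Complex.exp (↑uk * Complex.I))) := by ring
          _ = (f j * f k) * (Complex.exp (↑uj * Complex.I) * Complex.exp (↑vk * Complex.I)) := by
              rw [e3]
          _ = (f j * Complex.exp (↑uj * Complex.I)) * (f k * Complex.exp (↑vk * Complex.I)) := by
              ring
          _ = ((tj : ℂ) * w) * ((sk : ℂ) * w₀) := by rw [htj, hsk]
          _ = ((tj : ℂ) * sk) * (w₀ * w) := by ring
      have hww : w₀ * w ≠ 0 := mul_ne_zero hw₀ hw
      have key2 : Complex.exp (↑d * Complex.I) * ((sj : ℂ) * tk) = (tj : ℂ) * sk :=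
        mul_right_cancel₀ hww key
      have hsj0 : (sj : ℂ) ≠ 0 := by
        intro h
        have : f j * Complex.exp (↑vj * Complex.I) ≠ 0 :=
          mul_ne_zero (hf j) (Complex.exp_ne_zero _)
        rw [hsj, h, zero_mul] at this
        exact this rfl
      have htk0 : (tk : ℂ) ≠ 0 := by
        intro h
        have : f k * Complex.exp (↑uk * Complex.I) ≠ 0 :=
          mul_ne_zero (hf k) (Complex.exp_ne_zero _)
        rw [htk, h, zero_mul] at this
        exact this rfl
      have hexp_eq : Complex.exp (↑d * Complex.I) = ((tj * sk / (sj * tk) : ℝ) : ℂ) := by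
        push_cast
        field_simp
        linear_combination key2
      have hsin : Real.sin d = 0 := by
        have := congrArg Complex.im hexp_eq
        rwa [Complex.exp_ofReal_mul_I_im, Complex.ofReal_im] at this
      obtain ⟨m, hm⟩ := Real.sin_eq_zero_iff.mp hsin
      refine ⟨m, ?_⟩
      have hpt : ∀ i, ((a j i : ℝ) - (a k i : ℝ)) * ((θ i - θ₀ i) / Real.pi) =
          ((a j i : ℝ) * θ i + (a k i : ℝ) * θ₀ i - (a j i : ℝ) * θ₀ i -
            (a k i : ℝ) * θ i) / Real.pi := by
        intro i
        field_simp
        ring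
      calc ∑ i, ((a j i : ℝ) - (a k i : ℝ)) * ((θ i - θ₀ i) / Real.pi)
          = ∑ i, ((a j i : ℝ) * θ i + (a k i : ℝ) * θ₀ i - (a j i : ℝ) * θ₀ i -
              (a k i : ℝ) * θ i) / Real.pi := Finset.sum_congr rfl fun i _ => hpt i
        _ = (∑ i, ((a j i : ℝ) * θ i + (a k i : ℝ) * θ₀ i - (a j i : ℝ) * θ₀ i -
              (a k i : ℝ) * θ i)) / Real.pi := by rw [← Finset.sum_div]
        _ = d / Real.pi := by
            rw [hd, huj, huk, hvj, hvk]
            congr 1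
            simp [Finset.sum_sub_distrib, Finset.sum_add_distrib]
        _ = (m : ℝ) := by rw [← hm, mul_div_assoc, div_self hπ, mul_one]
    · funext i
      simp only [Pi.add_apply, Pi.smul_apply, smul_eq_mul]
      rw [mul_div_cancel₀ _ hπ]
      ring
  · rintro ⟨x, hx, rfl⟩
    rcases Nat.eq_zero_or_pos N with hN | hN
    · subst hN
      exact ⟨w₀, hw₀, fun k => k.elim0⟩
    · set k₀ : Fin N := ⟨0, hN⟩
      refine ⟨w₀ * Complex.exp (↑(∑ i, (a k₀ i : ℝ) * (Real.pi * x i)) * Complex.I),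
        mul_ne_zero hw₀ (Complex.exp_ne_zero _), fun k => ?_⟩
      obtain ⟨m, hm⟩ := hx k k₀
      obtain ⟨sk, hsk⟩ := hs k
      refine ⟨sk * (-1 : ℝ) ^ m, ?_⟩
      have hsum : ∑ i, (a k i : ℝ) * (θ₀ + Real.pi • x) i =
          (∑ i, (a k i : ℝ) * θ₀ i) + ∑ i, (a k i : ℝ) * (Real.pi * x i) := by
        rw [← Finset.sum_add_distrib]
        refine Finset.sum_congr rfl fun i _ => ?_
        simp only [Pi.add_apply, Pi.smul_apply, smul_eq_mul]
        ring
      have key : ∑ i, (a k i : ℝ) * (Real.pi * x i) =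
          (m : ℝ) * Real.pi + ∑ i, (a k₀ i : ℝ) * (Real.pi * x i) := by
        have h1 : ∑ i, ((a k i : ℝ) * (Real.pi * x i) - (a k₀ i : ℝ) * (Real.pi * x i)) =
            (m : ℝ) * Real.pi := by
          have h2 : ∀ i, (a k i : ℝ) * (Real.pi * x i) - (a k₀ i : ℝ) * (Real.pi * x i) =
              ((a k i : ℝ) - (a k₀ i : ℝ)) * x i * Real.pi := fun i => by ring
          rw [Finset.sum_congr rfl fun i _ => h2 i, ← Finset.sum_mul, hm]
        rw [Finset.sum_sub_distrib] at h1
        linarith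
      have hneg : ((-1 : ℝ) ^ m : ℂ) * Complex.exp (↑(∑ i, (a k₀ i : ℝ) * (Real.pi * x i))
          * Complex.I) = Complex.exp (↑(∑ i, (a k i : ℝ) * (Real.pi * x i)) * Complex.I) := by
        have hm1 : ((-1 : ℝ) ^ m : ℂ) = Complex.exp ((m : ℂ) * (↑Real.pi * Complex.I)) := by
          rw [Complex.exp_int_mul, Complex.exp_pi_mul_I]
          push_cast
          ring
        rw [hm1, ← Complex.exp_add]
        congr 1
        rw [key]
        push_cast
        ring
      rw [hsum, Complex.ofReal_add, add_mul, Complex.exp_add, ← hneg,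
        Complex.ofReal_mul, Complex.ofReal_zpow, Complex.ofReal_neg, Complex.ofReal_one]
      linear_combination ((-1 : ℂ) ^ m *
        Complex.exp (↑(∑ i, (a k₀ i : ℝ) * (Real.pi * x i)) * Complex.I)) * hsk
end

section
/- Let A = {a_0,…,a_{n+1}} ⊂ ℤ^n be a nondegenerate circuit such that the lattice generated by the differences {a − a' : a, a' ∈ A} is all of ℤ^n, let f ∈ (ℂ∖{0})^{n+2}, and fix κ ∈ {0,…,n+1}. For each θ ∈ T^n admitting a φ(θ) ∈ ℝ with e^{iφ(θ)}·f̂_k(θ) = δ_k for all k ≠ κ (such φ(θ) is unique modulo 2π), define φ_θ ∈ ℝ/2πℤ by φ_θ ≡ arg(δ_κ) − φ(θ) − ⟨a_κ, θ⟩ (mod 2π), i.e. φ_θ is the unique argument value for the coefficient f_κ that would give e^{iφ(θ)}·f̂_κ(θ) = δ_κ. Then the assignment θ ↦ φ_θ is injective: distinct such θ ∈ T^n yield distinct φ_θ. -/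
open MeasureTheory Complex

/-- Assume the differences of the circuit generate `ℤⁿ` and fix `κ`.
If `θ₁, θ₂` (given by representatives in `ℝⁿ`) admit rotations `φ₁, φ₂` with
`e^{iφ_j}·f̂_k(θ_j) = δ_k` for all `k ≠ κ`, and the induced argument values `φ_θ` for the
`κ`-th coefficient coincide (i.e. `e^{i(φ₁+⟨a_κ,θ₁⟩)} = e^{i(φ₂+⟨a_κ,θ₂⟩)}`), then
`θ₁ = θ₂` on the torus. -/
theorem unique_last_arguments {n : ℕ} (a : Fin (n + 2) → Fin n → ℤ)
    (ha : NondegCircuit a)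
    (hlat : Submodule.span ℤ {d : Fin n → ℤ | ∃ j k : Fin (n + 2), d = a j - a k} = ⊤)
    (f : Fin (n + 2) → ℂ) (hf : ∀ k, f k ≠ 0) (κ : Fin (n + 2))
    (θ₁ θ₂ : Fin n → ℝ) (φ₁ φ₂ : ℝ)
    (h1 : ∀ k, k ≠ κ →
      Complex.exp (φ₁ * Complex.I) * fhat (a k) (f k) θ₁ = ((galeB a k).sign : ℂ))
    (h2 : ∀ k, k ≠ κ →
      Complex.exp (φ₂ * Complex.I) * fhat (a k) (f k) θ₂ = ((galeB a k).sign : ℂ))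
    (heq : Complex.exp ((φ₁ + ∑ i, (a κ i : ℝ) * θ₁ i) * Complex.I) =
      Complex.exp ((φ₂ + ∑ i, (a κ i : ℝ) * θ₂ i) * Complex.I)) :
    toTorus θ₁ = toTorus θ₂ := by
  -- For every k, the full rotated phases agree.
  have key : ∀ k : Fin (n + 2),
      Complex.exp ((φ₁ + ∑ i, (a k i : ℝ) * θ₁ i) * Complex.I) =
      Complex.exp ((φ₂ + ∑ i, (a k i : ℝ) * θ₂ i) * Complex.I) := by
    intro k
    by_cases hk : k = κ
    · subst hk; exact heq
    · have e1 := h1 k hk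
      have e2 := h2 k hk
      have hc : (f k / (‖f k‖ : ℂ)) ≠ 0 :=
        div_ne_zero (hf k) (by
          simpa using (norm_ne_zero_iff.mpr (hf k)))
      have h12 : Complex.exp (φ₁ * Complex.I) * fhat (a k) (f k) θ₁ =
          Complex.exp (φ₂ * Complex.I) * fhat (a k) (f k) θ₂ := e1.trans e2.symm
      unfold fhat at h12
      have h12' : (f k / (‖f k‖ : ℂ)) *
          (Complex.exp (φ₁ * Complex.I) *
            Complex.exp ((∑ i, (a k i : ℝ) * θ₁ i) * Complex.I)) =
          (f k / (‖f k‖ : ℂ)) *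
          (Complex.exp (φ₂ * Complex.I) *
            Complex.exp ((∑ i, (a k i : ℝ) * θ₂ i) * Complex.I)) := by
        ring_nf
        ring_nf at h12
        linear_combination h12
      have hcc := mul_left_cancel₀ hc h12'
      rw [add_mul, add_mul, Complex.exp_add, Complex.exp_add]
      exact hcc
  -- Hence exp(⟨a j - a k, θ₁ - θ₂⟩ i) = 1.
  have dd : ∀ j k : Fin (n + 2),
      Complex.exp ((∑ i, (((a j - a k) i : ℤ) : ℝ) * (θ₁ i - θ₂ i)) * Complex.I) = 1 := by
    intro j k
    have hj := key j
    have hk := key k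
    have hsum : (((∑ i, (((a j - a k) i : ℤ) : ℝ) * (θ₁ i - θ₂ i)) : ℝ) : ℂ) * Complex.I =
        (((φ₁ : ℂ) + ((∑ i, (a j i : ℝ) * θ₁ i : ℝ) : ℂ)) * Complex.I +
         ((φ₂ : ℂ) + ((∑ i, (a k i : ℝ) * θ₂ i : ℝ) : ℂ)) * Complex.I) -
        (((φ₂ : ℂ) + ((∑ i, (a j i : ℝ) * θ₂ i : ℝ) : ℂ)) * Complex.I +
         ((φ₁ : ℂ) + ((∑ i, (a k i : ℝ) * θ₁ i : ℝ) : ℂ)) * Complex.I) := by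
      push_cast [Pi.sub_apply]
      simp only [sub_mul, mul_sub, Finset.sum_sub_distrib]
      ring
    rw [hsum, Complex.exp_sub, Complex.exp_add, Complex.exp_add, hj, ← hk,
      div_self (mul_ne_zero (Complex.exp_ne_zero _) (Complex.exp_ne_zero _))]
  -- Package this as membership in a ℤ-submodule, and use the lattice hypothesis.
  set Δ : Fin n → ℝ := fun i => θ₁ i - θ₂ i with hΔ
  let M : Submodule ℤ (Fin n → ℤ) :=
    { carrier := {d | Complex.exp ((∑ i, (d i : ℝ) * Δ i) * Complex.I) = 1}
      add_mem' := by
        intro x y hx hy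
        simp only [Set.mem_setOf_eq] at hx hy ⊢
        rw [show (∑ i, (((x + y) i : ℤ) : ℝ) * Δ i) =
            (∑ i, ((x i : ℤ) : ℝ) * Δ i) + ∑ i, ((y i : ℤ) : ℝ) * Δ i from by
          rw [← Finset.sum_add_distrib]
          exact Finset.sum_congr rfl fun i _ => by push_cast [Pi.add_apply]; ring]
        rw [Complex.ofReal_add, add_mul, Complex.exp_add, hx, hy, mul_one]
      zero_mem' := by simp
      smul_mem' := by
        intro z x hx
        simp only [Set.mem_setOf_eq] at hx ⊢
        rw [show (∑ i, (((z • x) i : ℤ) : ℝ) * Δ i) =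
            (z : ℝ) * ∑ i, ((x i : ℤ) : ℝ) * Δ i from by
          rw [Finset.mul_sum]
          exact Finset.sum_congr rfl fun i _ => by
            push_cast [Pi.smul_apply, smul_eq_mul]; ring]
        rw [Complex.ofReal_mul, Complex.ofReal_intCast, mul_assoc,
          Complex.exp_int_mul, hx, one_zpow] }
  have hMtop : (⊤ : Submodule ℤ (Fin n → ℤ)) ≤ M := by
    rw [← hlat, Submodule.span_le]
    rintro d ⟨j, k, rfl⟩
    exact dd j k
  have hdelta : ∀ i, ∃ m : ℤ, Δ i = m * (2 * Real.pi) := by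
    intro i
    have hmem : (Pi.single i 1 : Fin n → ℤ) ∈ M := hMtop Submodule.mem_top
    have hone : Complex.exp
        ((∑ i', ((Pi.single i 1 : Fin n → ℤ) i' : ℝ) * Δ i') * Complex.I) = 1 := hmem
    have hsingle : (∑ i', ((Pi.single i 1 : Fin n → ℤ) i' : ℝ) * Δ i') = Δ i := by
      rw [Finset.sum_eq_single i]
      · simp
      · intro b _ hb; simp [Pi.single_apply, hb]
      · simp
    rw [hsingle] at hone
    obtain ⟨m, hm⟩ := Complex.exp_eq_one_iff.mp hone
    have h' : ((Δ i : ℝ) : ℂ) = (m : ℂ) * (2 * (Real.pi : ℂ)) :=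
      mul_right_cancel₀ Complex.I_ne_zero (hm.trans (by ring))
    exact ⟨m, by exact_mod_cast h'⟩
  funext i
  obtain ⟨m, hm⟩ := hdelta i
  show (θ₁ i : AddCircle (2 * Real.pi)) = θ₂ i
  rw [QuotientAddGroup.eq_iff_sub_mem]
  exact AddSubgroup.mem_zmultiples_iff.mpr ⟨m, by rw [zsmul_eq_mul]; exact hm.symm⟩
end

section
/- Let A = {a_0, a_1, a_2, a_3} ⊂ ℤ² be a nondegenerate planar circuit and consider the system F_1(z) = f_1 z^{a_0} + z^{a_2} + f_2 z^{a_3}, F_2(z) = f_3 z^{a_1} + z^{a_2} + f_4 z^{a_3}. Suppose the line ℓ through a_2 and a_3 intersects the interior of conv(A). Then for every compact set K ⊂ (ℂ∖{0})^4 of coefficient tuples (f_1, f_2, f_3, f_4), the set ∪_{(f_1,…,f_4)∈K} { (log|z_1|, log|z_2|) : z ∈ (ℂ∖{0})², F_1(z) = F_2(z) = 0 } is a bounded subset of ℝ². -/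
open MeasureTheory Complex

namespace AmoebaAux

/-- linear functional `⟨a_k, x⟩`. -/
def pf (a : Fin 4 → Fin 2 → ℤ) (k : Fin 4) (x : Fin 2 → ℝ) : ℝ :=
  (a k 0 : ℝ) * x 0 + (a k 1 : ℝ) * x 1

/-- the tropical defect function. -/
def hfun (a : Fin 4 → Fin 2 → ℤ) (x : Fin 2 → ℝ) : ℝ :=
  max (max (pf a 0 x - max (pf a 2 x) (pf a 3 x))
           (max (pf a 2 x - max (pf a 0 x) (pf a 3 x)) (pf a 3 x - max (pf a 0 x) (pf a 2 x))))
      (max (pf a 1 x - max (pf a 2 x) (pf a 3 x))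
           (max (pf a 2 x - max (pf a 1 x) (pf a 3 x)) (pf a 3 x - max (pf a 1 x) (pf a 2 x))))

def det3 (a : Fin 4 → Fin 2 → ℤ) (i j k : Fin 4) : ℤ :=
  (a j 0 - a i 0) * (a k 1 - a i 1) - (a j 1 - a i 1) * (a k 0 - a i 0)

lemma hA0 (a : Fin 4 → Fin 2 → ℤ) (k) : hatA a 0 k = 1 := rfl
lemma hA1 (a : Fin 4 → Fin 2 → ℤ) (k) : hatA a 1 k = a k 0 := rfl
lemma hA2 (a : Fin 4 → Fin 2 → ℤ) (k) : hatA a 2 k = a k 1 := rfl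

lemma gale0 (a : Fin 4 → Fin 2 → ℤ) : galeB a 0 = det3 a 1 2 3 := by
  simp [galeB, det3, Matrix.det_fin_three, Matrix.of_apply, hA0, hA1, hA2, Fin.succAbove,
    Fin.lt_def,
    show Fin.succ (2:Fin 3) = (3:Fin 4) from rfl, show Fin.succ (1:Fin 3) = (2:Fin 4) from rfl,
    show Fin.succ (0:Fin 3) = (1:Fin 4) from rfl, show ((3:Fin 4):ℕ) = 3 from rfl,
    show Fin.castSucc (2:Fin 3) = (2:Fin 4) from rfl,
    show Fin.castSucc (1:Fin 3) = (1:Fin 4) from rfl,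
    show Fin.castSucc (0:Fin 3) = (0:Fin 4) from rfl]
  ring

lemma gale1 (a : Fin 4 → Fin 2 → ℤ) : galeB a 1 = - det3 a 0 2 3 := by
  simp [galeB, det3, Matrix.det_fin_three, Matrix.of_apply, hA0, hA1, hA2, Fin.succAbove,
    Fin.lt_def,
    show Fin.succ (2:Fin 3) = (3:Fin 4) from rfl, show Fin.succ (1:Fin 3) = (2:Fin 4) from rfl,
    show Fin.succ (0:Fin 3) = (1:Fin 4) from rfl, show ((3:Fin 4):ℕ) = 3 from rfl,
    show Fin.castSucc (2:Fin 3) = (2:Fin 4) from rfl,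
    show Fin.castSucc (1:Fin 3) = (1:Fin 4) from rfl,
    show Fin.castSucc (0:Fin 3) = (0:Fin 4) from rfl]
  ring

lemma gale2 (a : Fin 4 → Fin 2 → ℤ) : galeB a 2 = det3 a 0 1 3 := by
  simp [galeB, det3, Matrix.det_fin_three, Matrix.of_apply, hA0, hA1, hA2, Fin.succAbove,
    Fin.lt_def,
    show Fin.succ (2:Fin 3) = (3:Fin 4) from rfl, show Fin.succ (1:Fin 3) = (2:Fin 4) from rfl,
    show Fin.succ (0:Fin 3) = (1:Fin 4) from rfl, show ((3:Fin 4):ℕ) = 3 from rfl,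
    show Fin.castSucc (2:Fin 3) = (2:Fin 4) from rfl,
    show Fin.castSucc (1:Fin 3) = (1:Fin 4) from rfl,
    show Fin.castSucc (0:Fin 3) = (0:Fin 4) from rfl]
  ring

lemma gale3 (a : Fin 4 → Fin 2 → ℤ) : galeB a 3 = - det3 a 0 1 2 := by
  simp [galeB, det3, Matrix.det_fin_three, Matrix.of_apply, hA0, hA1, hA2, Fin.succAbove,
    Fin.lt_def,
    show Fin.succ (2:Fin 3) = (3:Fin 4) from rfl, show Fin.succ (1:Fin 3) = (2:Fin 4) from rfl,
    show Fin.succ (0:Fin 3) = (1:Fin 4) from rfl, show ((3:Fin 4):ℕ) = 3 from rfl,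
    show Fin.castSucc (2:Fin 3) = (2:Fin 4) from rfl,
    show Fin.castSucc (1:Fin 3) = (1:Fin 4) from rfl,
    show Fin.castSucc (0:Fin 3) = (0:Fin 4) from rfl]
  ring

lemma pair_aux (A C D : ℝ) (h1 : A ≤ max C D) (h2 : C ≤ max A D) (h3 : D ≤ max A C) :
    (A = C ∧ D ≤ A) ∨ (A = D ∧ C ≤ A) ∨ (C = D ∧ A ≤ C) := by
  simp only [max_def] at h1 h2 h3
  split_ifs at h1 h2 h3 <;>
    first
      | (left; constructor <;> linarith)
      | (right; left; constructor <;> linarith)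
      | (right; right; constructor <;> linarith)

lemma combine_aux (A B C D : ℝ)
    (h1 : A ≤ max C D) (h2 : C ≤ max A D) (h3 : D ≤ max A C)
    (h4 : B ≤ max C D) (h5 : C ≤ max B D) (h6 : D ≤ max B C) :
    (A = C ∧ C = D) ∨ (B = C ∧ C = D) ∨ (A = B ∧ B = C) ∨ (A = B ∧ B = D) ∨
    (C = D ∧ A < C ∧ B < C) := by
  rcases pair_aux A C D h1 h2 h3 with ⟨e1, l1⟩ | ⟨e1, l1⟩ | ⟨e1, l1⟩ <;>
    rcases pair_aux B C D h4 h5 h6 with ⟨e2, l2⟩ | ⟨e2, l2⟩ | ⟨e2, l2⟩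
  · exact Or.inr (Or.inr (Or.inl ⟨by linarith, by linarith⟩))
  · exact Or.inl ⟨e1, by linarith⟩
  · exact Or.inl ⟨e1, e2⟩
  · exact Or.inr (Or.inl ⟨e2, by linarith⟩)
  · exact Or.inr (Or.inr (Or.inr (Or.inl ⟨by linarith, by linarith⟩)))
  · exact Or.inl ⟨by linarith, e2⟩
  · exact Or.inr (Or.inl ⟨e2, e1⟩)
  · exact Or.inr (Or.inl ⟨by linarith, e1⟩)
  · rcases eq_or_lt_of_le l1 with e | l1'
    · exact Or.inl ⟨e, e1⟩
    · rcases eq_or_lt_of_le l2 with e | l2'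
      · exact Or.inr (Or.inl ⟨e, e1⟩)
      · exact Or.inr (Or.inr (Or.inr (Or.inr ⟨e1, l1', l2'⟩)))

lemma det_ne_aux (v0 v1 w0 w1 u0 u1 : ℝ) (hdet : v0 * w1 - v1 * w0 ≠ 0)
    (hv : v0 * u0 + v1 * u1 = 0) (hw : w0 * u0 + w1 * u1 = 0) : u0 = 0 ∧ u1 = 0 := by
  constructor
  · by_contra h
    apply hdet
    have : (v0 * w1 - v1 * w0) * u0 = 0 := by linear_combination w1 * hv - v1 * hw
    exact (mul_eq_zero.1 this).resolve_right h
  · by_contra h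
    apply hdet
    have : (v0 * w1 - v1 * w0) * u1 = 0 := by linear_combination v0 * hw - w0 * hv
    exact (mul_eq_zero.1 this).resolve_right h

lemma abs_lmon {n : ℕ} (a : Fin n → ℤ) (z : Fin n → ℂ) (hz : ∀ i, z i ≠ 0) :
    ‖lmon a z‖ =
      Real.exp (∑ i, (a i : ℝ) * Real.log ‖z i‖) := by
  rw [lmon, norm_prod, Real.exp_sum]
  refine Finset.prod_congr rfl fun i _ => ?_
  have h0 : 0 < ‖z i‖ := by
    simpa using hz i
  rw [norm_zpow, ← Real.rpow_intCast, Real.rpow_def_of_pos h0]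
  ring_nf

lemma exp_ineq (D Q R P : ℝ) (hD : 0 < D)
    (h : Real.exp P ≤ D * (Real.exp Q + Real.exp R)) :
    P ≤ Real.log (2 * D) + max Q R := by
  have h2 : Real.exp Q + Real.exp R ≤ 2 * Real.exp (max Q R) := by
    have := Real.exp_le_exp.2 (le_max_left Q R)
    have := Real.exp_le_exp.2 (le_max_right Q R)
    linarith
  have h3 : Real.exp P ≤ (2 * D) * Real.exp (max Q R) := by
    nlinarith [Real.exp_pos (max Q R)]
  have h4 := Real.log_le_log (Real.exp_pos P) h3
  rwa [Real.log_exp, Real.log_mul (by positivity) (by positivity), Real.log_exp] at h4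

lemma tri_ineq (c1 c2 L0 L2 L3 : ℂ) (hsum : c1 * L0 + L2 + c2 * L3 = 0)
    (M : ℝ) (hM : 1 ≤ M)
    (hc1u : ‖c1‖ ≤ M) (hc1l : 1 / M ≤ ‖c1‖)
    (hc2u : ‖c2‖ ≤ M) (hc2l : 1 / M ≤ ‖c2‖)
    (E0 E2 E3 : ℝ) (h0 : ‖L0‖ = Real.exp E0)
    (h2 : ‖L2‖ = Real.exp E2) (h3 : ‖L3‖ = Real.exp E3) :
    E0 ≤ Real.log (2 * M ^ 2) + max E2 E3 ∧
    E2 ≤ Real.log (2 * M ^ 2) + max E0 E3 ∧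
    E3 ≤ Real.log (2 * M ^ 2) + max E0 E2 := by
  have hM0 : (0:ℝ) < M := by linarith
  have hsq : (0:ℝ) < M ^ 2 := by positivity
  have e0 := Real.exp_pos E0
  have e2 := Real.exp_pos E2
  have e3 := Real.exp_pos E3
  have k1 : ‖c1‖ * Real.exp E0 ≤ Real.exp E2 + ‖c2‖ * Real.exp E3 := by
    have : c1 * L0 = -(L2 + c2 * L3) := by linear_combination hsum
    calc ‖c1‖ * Real.exp E0 = ‖c1 * L0‖ := by rw [norm_mul, h0]
    _ = ‖L2 + c2 * L3‖ := by rw [this, norm_neg]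
    _ ≤ ‖L2‖ + ‖c2 * L3‖ := norm_add_le _ _
    _ = Real.exp E2 + ‖c2‖ * Real.exp E3 := by rw [h2, norm_mul, h3]
  have k2 : Real.exp E2 ≤ ‖c1‖ * Real.exp E0 + ‖c2‖ * Real.exp E3 := by
    have : L2 = -(c1 * L0 + c2 * L3) := by linear_combination hsum
    calc Real.exp E2 = ‖L2‖ := h2.symm
    _ = ‖c1 * L0 + c2 * L3‖ := by rw [this, norm_neg]
    _ ≤ _ := by
        refine (norm_add_le _ _).trans ?_
        rw [norm_mul, norm_mul, h0, h3]
  have k3 : ‖c2‖ * Real.exp E3 ≤ Real.exp E2 + ‖c1‖ * Real.exp E0 := by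
    have : c2 * L3 = -(L2 + c1 * L0) := by linear_combination hsum
    calc ‖c2‖ * Real.exp E3 = ‖c2 * L3‖ := by rw [norm_mul, h3]
    _ = ‖L2 + c1 * L0‖ := by rw [this, norm_neg]
    _ ≤ ‖L2‖ + ‖c1 * L0‖ := norm_add_le _ _
    _ = Real.exp E2 + ‖c1‖ * Real.exp E0 := by rw [h2, norm_mul, h0]
  have hc1p : (0:ℝ) < ‖c1‖ := lt_of_lt_of_le (by positivity) hc1l
  have hc2p : (0:ℝ) < ‖c2‖ := lt_of_lt_of_le (by positivity) hc2l
  have hMM : 0 ≤ M * (M - 1) := mul_nonneg hM0.le (by linarith)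
  refine ⟨?_, ?_, ?_⟩
  · apply exp_ineq (M^2) _ _ _ hsq
    have h5 : (1/M) * Real.exp E0 ≤ Real.exp E2 + M * Real.exp E3 := by
      nlinarith [mul_le_mul_of_nonneg_right hc1l e0.le, mul_le_mul_of_nonneg_right hc2u e3.le]
    rw [div_mul_eq_mul_div, div_le_iff₀ hM0] at h5
    nlinarith [mul_nonneg hMM e2.le, mul_nonneg hMM e3.le]
  · apply exp_ineq (M^2) _ _ _ hsq
    nlinarith [mul_le_mul_of_nonneg_right hc1u e0.le, mul_le_mul_of_nonneg_right hc2u e3.le,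
      mul_nonneg hMM e0.le, mul_nonneg hMM e3.le]
  · apply exp_ineq (M^2) _ _ _ hsq
    have h5 : (1/M) * Real.exp E3 ≤ Real.exp E2 + M * Real.exp E0 := by
      nlinarith [mul_le_mul_of_nonneg_right hc2l e3.le, mul_le_mul_of_nonneg_right hc1u e0.le]
    rw [div_mul_eq_mul_div, div_le_iff₀ hM0] at h5
    nlinarith [mul_nonneg hMM e2.le, mul_nonneg hMM e0.le]

lemma line_sep (a : Fin 4 → Fin 2 → ℤ)
    (hline : ∃ t : ℝ, (fun i => (1 - t) * (a 2 i : ℝ) + t * (a 3 i : ℝ)) ∈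
      interior (convexHull ℝ (realPts a)))
    (u : Fin 2 → ℝ) (hu : u ≠ 0)
    (hle : ∀ k, (a k 0 : ℝ) * u 0 + (a k 1 : ℝ) * u 1 ≤ (a 2 0 : ℝ) * u 0 + (a 2 1 : ℝ) * u 1)
    (h23 : (a 3 0 : ℝ) * u 0 + (a 3 1 : ℝ) * u 1 = (a 2 0 : ℝ) * u 0 + (a 2 1 : ℝ) * u 1) :
    False := by
  obtain ⟨t, ht⟩ := hline
  set c : ℝ := (a 2 0 : ℝ) * u 0 + (a 2 1 : ℝ) * u 1 with hc
  set f : (Fin 2 → ℝ) → ℝ := fun y => y 0 * u 0 + y 1 * u 1 with hf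
  have hlin : IsLinearMap ℝ f := by
    constructor
    · intro x y; simp [hf]; ring
    · intro r x; simp [hf]; ring
  have hsub : convexHull ℝ (realPts a) ⊆ {y | f y ≤ c} := by
    apply convexHull_min _ (convex_halfSpace_le hlin c)
    rintro y ⟨k, rfl⟩
    exact hle k
  set q : Fin 2 → ℝ := fun i => (1 - t) * (a 2 i : ℝ) + t * (a 3 i : ℝ) with hq
  have hfq : f q = c := by simp [hf, hq]; linear_combination t * h23
  obtain ⟨ε, hε, hball⟩ := Metric.isOpen_iff.1 isOpen_interior q ht
  have hun : 0 < u 0 * u 0 + u 1 * u 1 := by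
    rcases Function.ne_iff.1 hu with ⟨i, hi⟩
    fin_cases i <;> simp at hi <;>
      nlinarith [mul_self_pos.2 hi, mul_self_nonneg (u 0), mul_self_nonneg (u 1)]
  set δ : ℝ := ε / (2 * (‖u‖ + 1)) with hδ
  have hδpos : 0 < δ := by positivity
  have hy : q + δ • u ∈ Metric.ball q ε := by
    rw [Metric.mem_ball, dist_eq_norm]
    have : q + δ • u - q = δ • u := by abel
    rw [this, norm_smul, Real.norm_eq_abs, abs_of_pos hδpos]
    have h1 : ‖u‖ < 2 * (‖u‖ + 1) := by linarith [norm_nonneg u]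
    calc δ * ‖u‖ = ε * ‖u‖ / (2 * (‖u‖ + 1)) := by rw [hδ]; ring
    _ < ε := by
        rw [div_lt_iff₀ (by positivity)]
        nlinarith [norm_nonneg u]
  have hmem : f (q + δ • u) ≤ c := hsub (interior_subset (hball hy))
  have hq0 : q 0 * u 0 + q 1 * u 1 = c := hfq
  have hfy : f (q + δ • u) = c + δ * (u 0 * u 0 + u 1 * u 1) := by
    simp only [hf, Pi.add_apply, Pi.smul_apply, smul_eq_mul]
    linear_combination hq0
  rw [hfy] at hmem
  nlinarith [mul_pos hδpos hun]

lemma pf_smul (a : Fin 4 → Fin 2 → ℤ) (k : Fin 4) (r : ℝ) (x : Fin 2 → ℝ) :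
    pf a k (r • x) = r * pf a k x := by
  simp [pf, Pi.smul_apply, smul_eq_mul]; ring

lemma hfun_smul (a : Fin 4 → Fin 2 → ℤ) (r : ℝ) (hr : 0 ≤ r) (x : Fin 2 → ℝ) :
    hfun a (r • x) = r * hfun a x := by
  have hm : ∀ p q : ℝ, max (r * p) (r * q) = r * max p q :=
    fun p q => (mul_max_of_nonneg p q hr).symm
  simp only [hfun, pf_smul, ← mul_sub, hm]

lemma hfun_cont (a : Fin 4 → Fin 2 → ℤ) : Continuous (hfun a) := by
  have hp : ∀ k, Continuous (pf a k) := fun k =>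
    (continuous_const.mul (continuous_apply 0)).add (continuous_const.mul (continuous_apply 1))
  exact (((hp 0).sub ((hp 2).max (hp 3))).max
      (((hp 2).sub ((hp 0).max (hp 3))).max ((hp 3).sub ((hp 0).max (hp 2))))).max
    (((hp 1).sub ((hp 2).max (hp 3))).max
      (((hp 2).sub ((hp 1).max (hp 3))).max ((hp 3).sub ((hp 1).max (hp 2)))))

lemma hfun_pos (a : Fin 4 → Fin 2 → ℤ) (ha : NondegCircuit a)
    (hline : ∃ t : ℝ, (fun i => (1 - t) * (a 2 i : ℝ) + t * (a 3 i : ℝ)) ∈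
      interior (convexHull ℝ (realPts a)))
    (u : Fin 2 → ℝ) (hu : u ≠ 0) : 0 < hfun a u := by
  by_contra hcon
  push_neg at hcon
  simp only [hfun, max_le_iff, sub_nonpos] at hcon
  obtain ⟨⟨t1, t2, t3⟩, t4, t5, t6⟩ := hcon
  have hcoll : ∀ i j k : Fin 4, (det3 a i j k : ℤ) ≠ 0 →
      pf a i u = pf a j u → pf a j u = pf a k u → False := by
    intro i j k hd e1 e2
    have hdR : ((a j 0 : ℝ) - a i 0) * ((a k 1 : ℝ) - a i 1) -
        ((a j 1 : ℝ) - a i 1) * ((a k 0 : ℝ) - a i 0) ≠ 0 := by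
      intro h
      apply hd
      have : ((det3 a i j k : ℤ) : ℝ) = 0 := by push_cast [det3]; linear_combination h
      exact_mod_cast this
    have hv : ((a j 0 : ℝ) - a i 0) * u 0 + ((a j 1 : ℝ) - a i 1) * u 1 = 0 := by
      simp only [pf] at e1; linear_combination -e1
    have hw : ((a k 0 : ℝ) - a i 0) * u 0 + ((a k 1 : ℝ) - a i 1) * u 1 = 0 := by
      simp only [pf] at e1 e2; linear_combination -e1 - e2
    obtain ⟨h0, h1⟩ := det_ne_aux _ _ _ _ _ _ hdR hv hw
    exact hu (funext fun i => by fin_cases i <;> assumption)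
  rcases combine_aux (pf a 0 u) (pf a 1 u) (pf a 2 u) (pf a 3 u) t1 t2 t3 t4 t5 t6 with
    ⟨e1, e2⟩ | ⟨e1, e2⟩ | ⟨e1, e2⟩ | ⟨e1, e2⟩ | ⟨e, l1, l2⟩
  · exact hcoll 0 2 3 (by
      intro h; exact ha 1 (by rw [gale1, h, neg_zero])) e1 e2
  · exact hcoll 1 2 3 (by
      intro h; exact ha 0 (by rw [gale0, h])) e1 e2
  · exact hcoll 0 1 2 (by
      intro h; exact ha 3 (by rw [gale3, h, neg_zero])) e1 e2
  · exact hcoll 0 1 3 (by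
      intro h; exact ha 2 (by rw [gale2, h])) e1 e2
  · refine line_sep a hline u hu (fun k => ?_) ?_
    · have : pf a k u ≤ pf a 2 u := by
        fin_cases k
        · exact l1.le
        · exact l2.le
        · exact le_refl _
        · exact e.ge
      simpa [pf] using this
    · have : pf a 3 u = pf a 2 u := e.symm
      simpa [pf] using this

end AmoebaAux

/-- If the line through `a₂` and `a₃` meets the interior of the Newton
polytope, then over any compact set of nonvanishing coefficients the amoebas of the circuit
system `F₁ = F₂ = 0` are uniformly bounded. -/
theorem amoeba_bounded_over_compact (a : Fin 4 → Fin 2 → ℤ) (ha : NondegCircuit a)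
    (hline : ∃ t : ℝ, (fun i => (1 - t) * (a 2 i : ℝ) + t * (a 3 i : ℝ)) ∈
      interior (convexHull ℝ (realPts a)))
    (K : Set (Fin 4 → ℂ)) (hK : IsCompact K) (hK0 : ∀ g ∈ K, ∀ j, g j ≠ 0) :
    Bornology.IsBounded {w : Fin 2 → ℝ | ∃ g ∈ K, ∃ z : Fin 2 → ℂ,
      (∀ i, z i ≠ 0) ∧ sysF1 a g z = 0 ∧ sysF2 a g z = 0 ∧
      w = fun i => Real.log ‖z i‖} := by
  classical
  open AmoebaAux in
  rw [isBounded_iff_forall_norm_le]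
  rcases Set.eq_empty_or_nonempty K with rfl | hKne
  · exact ⟨0, by rintro x ⟨g, hg, -⟩; simp at hg⟩
  -- bounds on the coefficients
  have hmj : ∀ j : Fin 4, ∃ m : ℝ, 0 < m ∧ ∀ g ∈ K, m ≤ ‖g j‖ := by
    intro j
    obtain ⟨gj, hgjK, hgjmin⟩ := hK.exists_isMinOn hKne
      ((continuous_norm.comp (continuous_apply j)).continuousOn)
    refine ⟨‖gj j‖, ?_, fun g hg => hgjmin hg⟩
    simpa using hK0 gj hgjK j
  choose m hm0 hm using hmj
  obtain ⟨R, hR⟩ := isBounded_iff_forall_norm_le.1 hK.isBounded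
  set M : ℝ := max 1 (max R ((m 0)⁻¹ + (m 1)⁻¹ + (m 2)⁻¹ + (m 3)⁻¹)) with hM
  have hM1 : (1:ℝ) ≤ M := le_max_left _ _
  have hM0 : (0:ℝ) < M := lt_of_lt_of_le one_pos hM1
  have hMu : ∀ g ∈ K, ∀ j, ‖g j‖ ≤ M := by
    intro g hg j
    have h1 : ‖g j‖ = ‖g j‖ := rfl
    calc ‖g j‖ = ‖g j‖ := h1
    _ ≤ ‖g‖ := norm_le_pi_norm g j
    _ ≤ R := hR g hg
    _ ≤ M := le_trans (le_max_left _ _) (le_max_right _ _)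
  have hMl : ∀ g ∈ K, ∀ j, 1 / M ≤ ‖g j‖ := by
    intro g hg j
    have hinv : (m j)⁻¹ ≤ M := by
      refine le_trans ?_ (le_trans (le_max_right R _) (le_max_right 1 _))
      have i0 := inv_pos.2 (hm0 0)
      have i1 := inv_pos.2 (hm0 1)
      have i2 := inv_pos.2 (hm0 2)
      have i3 := inv_pos.2 (hm0 3)
      fin_cases j <;> simp <;> linarith
    have h2 := mul_le_mul_of_nonneg_right hinv (hm0 j).le
    rw [inv_mul_cancel₀ (hm0 j).ne'] at h2
    have h3 : 1 / M ≤ m j := by rw [div_le_iff₀ hM0]; linarith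
    exact h3.trans (hm j g hg)
  set C0 : ℝ := Real.log (2 * M ^ 2) with hC0def
  have hC0 : 0 < C0 := Real.log_pos (by nlinarith)
  -- minimum of hfun on the unit sphere
  obtain ⟨u0, hu0S, hmin⟩ := (isCompact_sphere (0 : Fin 2 → ℝ) 1).exists_isMinOn
    (NormedSpace.sphere_nonempty.2 zero_le_one) (hfun_cont a).continuousOn
  have hu0n : ‖u0‖ = 1 := by simpa using mem_sphere_zero_iff_norm.1 hu0S
  have hu0 : u0 ≠ 0 := fun h => by simp [h] at hu0n
  set ε : ℝ := hfun a u0 with hεdef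
  have hε : 0 < ε := hfun_pos a ha hline u0 hu0
  refine ⟨C0 / ε, ?_⟩
  rintro w ⟨g, hgK, z, hz, h1, h2, rfl⟩
  set x : Fin 2 → ℝ := fun i => Real.log ‖z i‖ with hx
  have hE : ∀ k : Fin 4, ‖lmon (a k) z‖ = Real.exp (pf a k x) := by
    intro k
    rw [abs_lmon (a k) z hz]
    congr 1
    simp [pf, Fin.sum_univ_two, hx]
  have T1 := tri_ineq (g 0) (g 1) (lmon (a 0) z) (lmon (a 2) z) (lmon (a 3) z)
    (by simpa [sysF1] using h1) M hM1
    (hMu g hgK 0) (hMl g hgK 0) (hMu g hgK 1) (hMl g hgK 1)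
    (pf a 0 x) (pf a 2 x) (pf a 3 x) (hE 0) (hE 2) (hE 3)
  have T2 := tri_ineq (g 2) (g 3) (lmon (a 1) z) (lmon (a 2) z) (lmon (a 3) z)
    (by simpa [sysF2] using h2) M hM1
    (hMu g hgK 2) (hMl g hgK 2) (hMu g hgK 3) (hMl g hgK 3)
    (pf a 1 x) (pf a 2 x) (pf a 3 x) (hE 1) (hE 2) (hE 3)
  have hhx : hfun a x ≤ C0 := by
    obtain ⟨s1, s2, s3⟩ := T1
    obtain ⟨s4, s5, s6⟩ := T2
    simp only [hfun, max_le_iff, sub_le_iff_le_add]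
    refine ⟨⟨?_, ?_, ?_⟩, ?_, ?_, ?_⟩ <;> [exact s1; exact s2; exact s3; exact s4;
      exact s5; exact s6]
  by_cases hx0 : x = 0
  · rw [hx0]
    simpa using (by positivity : (0:ℝ) ≤ C0 / ε)
  · have hxn : ‖x‖ ≠ 0 := norm_ne_zero_iff.2 hx0
    have hxpos : 0 < ‖x‖ := lt_of_le_of_ne (norm_nonneg x) (Ne.symm hxn)
    set u : Fin 2 → ℝ := ‖x‖⁻¹ • x with hudef
    have hun : ‖u‖ = 1 := norm_smul_inv_norm hx0
    have huS : u ∈ Metric.sphere (0 : Fin 2 → ℝ) 1 := by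
      simpa using mem_sphere_zero_iff_norm.2 hun
    have hεu : ε ≤ hfun a u := hmin huS
    have hxu : x = ‖x‖ • u := by
      rw [hudef, smul_inv_smul₀ hxn]
    have hhom : hfun a x = ‖x‖ * hfun a u := by
      conv_lhs => rw [hxu]
      exact hfun_smul a ‖x‖ (norm_nonneg x) u
    rw [le_div_iff₀ hε]
    calc ‖x‖ * ε ≤ ‖x‖ * hfun a u := by
          exact mul_le_mul_of_nonneg_left hεu (norm_nonneg x)
    _ = hfun a x := hhom.symm
    _ ≤ C0 := hhx
end

section
/- Let A = {a_0, a_1, a_2, a_3} ⊂ ℤ² be a nondegenerate planar circuit and consider the system F_1(z) = f_1 z^{a_0} + z^{a_2} + f_2 z^{a_3}, F_2(z) = f_3 z^{a_1} + z^{a_2} + f_4 z^{a_3}, with f_1, f_3 ∈ ℂ∖{0} and f_2, f_4 ∈ ℝ∖{0}. Assume f is nonreal, i.e. there is no θ ∈ T² at which both F_1 and F_2 are real. Let g(z) = ε c z^a + ε' c' z^{a'} be any binomial obtained by choosing two monomials c z^a and c' z^{a'} with a ≠ a' from among the monomials f_1 z^{a_0}, z^{a_2}, f_2 z^{a_3}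 of F_1 and f_3 z^{a_1}, z^{a_2}, f_4 z^{a_3} of F_2, with signs ε, ε' ∈ {±1}. If f_2 and f_4 have opposite signs, then the coamoeba C_g is disjoint from L_f = C_{F_1} ∩ C_{F_2}. If f_2 and f_4 have equal signs, then C_g is disjoint from L_f except possibly when g = ±(f_1 z^{a_0} − f_3 z^{a_1}). -/
open MeasureTheory Complex

private lemma lmon_eq {n : ℕ} (b : Fin n → ℤ) (z : Fin n → ℂ) (hz : ∀ i, z i ≠ 0) :
    ∃ R : ℝ, 0 < R ∧ lmon b z = (R : ℝ) * Complex.exp ((∑ i, (b i : ℝ) * (z i).arg) * Complex.I) := by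
  refine ⟨∏ i, ‖z i‖ ^ b i,
    Finset.prod_pos fun i _ => zpow_pos (norm_pos_iff.mpr (hz i)) _, ?_⟩
  rw [lmon]
  have h5 : ((∑ i, (b i : ℝ) * (z i).arg : ℝ) : ℂ) * Complex.I
      = ∑ i, ((b i : ℂ) * ((z i).arg * Complex.I)) := by
    push_cast [Finset.sum_mul]
    exact Finset.sum_congr rfl fun i _ => by ring
  rw [h5, Complex.exp_sum, Complex.ofReal_prod]
  rw [← Finset.prod_mul_distrib]
  refine Finset.prod_congr rfl fun i _ => ?_
  rw [Complex.exp_int_mul, Complex.ofReal_zpow, ← mul_zpow, Complex.norm_mul_exp_arg_mul_I]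

private lemma exp_sum_eq {n : ℕ} {θ θ' : Fin n → ℝ} (h : toTorus θ = toTorus θ') (b : Fin n → ℤ) :
    Complex.exp ((∑ i, (b i : ℝ) * θ' i) * Complex.I) =
      Complex.exp ((∑ i, (b i : ℝ) * θ i) * Complex.I) := by
  have hm : ∀ i, ∃ m : ℤ, θ' i = θ i + m * (2 * Real.pi) := by
    intro i
    have h2 := congrFun h i
    have h3 : -(θ i) + θ' i ∈ AddSubgroup.zmultiples (2 * Real.pi) :=
      QuotientAddGroup.eq.mp h2
    obtain ⟨m, hm⟩ := AddSubgroup.mem_zmultiples_iff.mp h3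
    exact ⟨m, by rw [zsmul_eq_mul] at hm; linarith⟩
  choose m hm' using hm
  have hsum : (∑ i, (b i : ℝ) * θ' i)
      = (∑ i, (b i : ℝ) * θ i) + ((∑ i, b i * m i : ℤ) : ℝ) * (2 * Real.pi) := by
    push_cast
    rw [Finset.sum_mul, ← Finset.sum_add_distrib]
    refine Finset.sum_congr rfl fun i _ => ?_
    rw [hm' i]; ring
  rw [hsum, Complex.ofReal_add, add_mul, Complex.exp_add]
  have h4 : ((((∑ i, b i * m i : ℤ) : ℝ) * (2 * Real.pi) : ℝ) : ℂ) * Complex.I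
      = ((∑ i, b i * m i : ℤ) : ℂ) * (2 * (Real.pi : ℂ) * Complex.I) := by push_cast; ring
  rw [h4, Complex.exp_int_mul_two_pi_mul_I, mul_one]

private lemma col_symm (x y : ℂ) (hx : x ≠ 0) (h : ∃ t : ℝ, x = (t:ℂ) * y) :
    ∃ u : ℝ, y = (u:ℂ) * x := by
  obtain ⟨t, ht⟩ := h
  have ht0 : t ≠ 0 := by rintro rfl; simp at ht; exact hx ht
  refine ⟨t⁻¹, ?_⟩
  have : (t:ℂ) ≠ 0 := by exact_mod_cast ht0
  rw [ht, Complex.ofReal_inv, ← mul_assoc, inv_mul_cancel₀ this, one_mul]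

private lemma solve3 (x y z w : ℂ) (aR bR cR : ℝ) (ha : aR ≠ 0)
    (h : (aR:ℂ) * x + (bR:ℂ) * y + (cR:ℂ) * z = 0)
    (hy : ∃ u : ℝ, y = (u:ℂ) * w) (hz : ∃ u : ℝ, z = (u:ℂ) * w) :
    ∃ u : ℝ, x = (u:ℂ) * w := by
  obtain ⟨u, hu⟩ := hy
  obtain ⟨v, hv⟩ := hz
  refine ⟨-(bR * u + cR * v) / aR, ?_⟩
  have ha' : (aR:ℂ) ≠ 0 := by exact_mod_cast ha
  push_cast
  field_simp
  linear_combination h - (bR:ℂ) * hu - (cR:ℂ) * hv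

private lemma hardCase (W0 W1 W2 W3 : ℂ) (hW2 : W2 ≠ 0)
    (r0 r1 r2 : ℝ) (hr0 : 0 < r0) (hr1 : 0 < r1) (hr2 : 0 < r2)
    (R1 : (r0:ℂ) * W0 + (r1:ℂ) * W1 + (r2:ℂ) * W2 = 0)
    (s0 s1 c2 : ℝ) (hs0 : 0 < s0) (hs1 : 0 < s1)
    (R2 : (s0:ℂ) * W3 + (s1:ℂ) * W1 + (c2:ℂ) * W2 = 0)
    (t : ℝ) (ht : W3 = (t:ℂ) * W0) :
    (∃ u : ℝ, W1 = (u:ℂ) * W2) ∨ (0 < t ∧ 0 < c2) := by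
  set α := s0 * t * r1 - r0 * s1 with hα
  set β := s0 * t * r2 - r0 * c2 with hβ
  have key : (α:ℂ) * W1 + (β:ℂ) * W2 = 0 := by
    rw [hα, hβ]
    push_cast
    linear_combination (s0 * t : ℂ) * R1 - (r0:ℂ) * R2 + (r0 * s0 : ℂ) * ht
  by_cases hα0 : α = 0
  · by_cases hβ0 : β = 0
    · right
      rw [hα] at hα0
      rw [hβ] at hβ0
      have ht0 : 0 < t := by
        have h1 : t = (r0 * s1) / (s0 * r1) := by field_simp; linarith
        rw [h1]; positivity
      refine ⟨ht0, ?_⟩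
      have h2 : c2 = (s0 * t * r2) / r0 := by field_simp; linarith
      rw [h2]; positivity
    · exfalso
      apply hW2
      have hβ' : (β:ℂ) ≠ 0 := by exact_mod_cast hβ0
      have hz : (β:ℂ) * W2 = 0 := by
        rw [hα0] at key; simpa using key
      exact (mul_eq_zero.mp hz).resolve_left hβ'
  · left
    refine ⟨-β / α, ?_⟩
    have hα' : (α:ℂ) ≠ 0 := by exact_mod_cast hα0
    push_cast
    field_simp
    linear_combination key

set_option maxHeartbeats 1600000 in
/-- Let `F₁ = f₁z^{a₀} + z^{a₂} + f₂z^{a₃}`, `F₂ = f₃z^{a₁} + z^{a₂} + f₄z^{a₃}`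
with `f₂, f₄` real, and assume the system is nonreal. Let `g` be a binomial built from two
monomials of the system (with distinct exponents and possibly flipped signs). If `f₂` and `f₄`
have opposite signs then `C_g` is disjoint from `L_f = C_{F₁} ∩ C_{F₂}`; if they have equal
signs the same holds except possibly when `g = ±(f₁z^{a₀} − f₃z^{a₁})`. -/
theorem binomial_coamoeba_in_complement (a : Fin 4 → Fin 2 → ℤ) (ha : NondegCircuit a)
    (f₁ f₃ : ℂ) (hf₁ : f₁ ≠ 0) (hf₃ : f₃ ≠ 0)
    (f₂ f₄ : ℝ) (hf₂ : f₂ ≠ 0) (hf₄ : f₄ ≠ 0)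
    (hnonreal : ∀ θ : Fin 2 → ℝ,
      ¬(RealAtMons [(f₁, a 0), (1, a 2), ((f₂ : ℂ), a 3)] θ ∧
        RealAtMons [(f₃, a 1), (1, a 2), ((f₄ : ℂ), a 3)] θ))
    (i j : Fin 6) (ε ε' : ℂ) (hε : ε = 1 ∨ ε = -1) (hε' : ε' = 1 ∨ ε' = -1) :
    let M : Fin 6 → ℂ × (Fin 2 → ℤ) :=
      ![(f₁, a 0), (1, a 2), ((f₂ : ℂ), a 3), (f₃, a 1), (1, a 2), ((f₄ : ℂ), a 3)]
    let g : (Fin 2 → ℂ) → ℂ := fun z =>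
      ε * (M i).1 * lmon (M i).2 z + ε' * (M j).1 * lmon (M j).2 z
    let Lf : Set (Torus 2) :=
      coamoebaF (fun z => f₁ * lmon (a 0) z + lmon (a 2) z + (f₂ : ℂ) * lmon (a 3) z) ∩
        coamoebaF (fun z => f₃ * lmon (a 1) z + lmon (a 2) z + (f₄ : ℂ) * lmon (a 3) z)
    (M i).2 ≠ (M j).2 →
      (f₂ * f₄ < 0 → Disjoint (coamoebaF g) Lf) ∧
      (0 < f₂ * f₄ →
        ¬((∀ z, g z = f₁ * lmon (a 0) z - f₃ * lmon (a 1) z) ∨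
          (∀ z, g z = f₃ * lmon (a 1) z - f₁ * lmon (a 0) z)) →
        Disjoint (coamoebaF g) Lf) := by
  intro M g Lf
  have hM0 : M 0 = (f₁, a 0) := rfl
  have hM1 : M 1 = ((1:ℂ), a 2) := rfl
  have hM2 : M 2 = ((f₂:ℂ), a 3) := rfl
  have hM3 : M 3 = (f₃, a 1) := rfl
  have hM4 : M 4 = ((1:ℂ), a 2) := rfl
  have hM5 : M 5 = ((f₄:ℂ), a 3) := rfl
  have hgdef : g = fun z => ε * (M i).1 * lmon (M i).2 z + ε' * (M j).1 * lmon (M j).2 z := rfl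
  have hLfdef : Lf =
      coamoebaF (fun z => f₁ * lmon (a 0) z + lmon (a 2) z + (f₂:ℂ) * lmon (a 3) z) ∩
        coamoebaF (fun z => f₃ * lmon (a 1) z + lmon (a 2) z + (f₄:ℂ) * lmon (a 3) z) := rfl
  clear_value M g Lf
  intro hne
  have hf₂' : (f₂:ℂ) ≠ 0 := Complex.ofReal_ne_zero.mpr hf₂
  have hf₄' : (f₄:ℂ) ≠ 0 := Complex.ofReal_ne_zero.mpr hf₄
  have main : ∀ θT, θT ∈ coamoebaF g → θT ∈ Lf →
      0 < f₂ * f₄ ∧ ((∀ z, g z = f₁ * lmon (a 0) z - f₃ * lmon (a 1) z) ∨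
        (∀ z, g z = f₃ * lmon (a 1) z - f₁ * lmon (a 0) z)) := by
    intro θT hgθ hLθ
    rw [hLfdef] at hLθ
    obtain ⟨hLθ1, hLθ2⟩ := hLθ
    obtain ⟨z1, hz1, hz1eq', hθ1⟩ := hLθ1
    obtain ⟨z2, hz2, hz2eq', hθ2⟩ := hLθ2
    have hz1eq : f₁ * lmon (a 0) z1 + lmon (a 2) z1 + (f₂:ℂ) * lmon (a 3) z1 = 0 := hz1eq'
    have hz2eq : f₃ * lmon (a 1) z2 + lmon (a 2) z2 + (f₄:ℂ) * lmon (a 3) z2 = 0 := hz2eq'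
    obtain ⟨zg, hzg, hzgeq, hθg⟩ := hgθ
    simp only [hgdef] at hzgeq
    have hcoh2 : ∀ b : Fin 2 → ℤ,
        Complex.exp ((∑ x, ((b x : ℤ) : ℝ) * (z2 x).arg) * Complex.I)
          = Complex.exp ((∑ x, ((b x : ℤ) : ℝ) * (z1 x).arg) * Complex.I) :=
      fun b => exp_sum_eq (hθ1.symm.trans hθ2) b
    have hcohg : ∀ b : Fin 2 → ℤ,
        Complex.exp ((∑ x, ((b x : ℤ) : ℝ) * (zg x).arg) * Complex.I)
          = Complex.exp ((∑ x, ((b x : ℤ) : ℝ) * (z1 x).arg) * Complex.I) :=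
      fun b => exp_sum_eq (hθ1.symm.trans hθg) b
    obtain ⟨R0, hR0, hl10⟩ := lmon_eq (a 0) z1 hz1
    obtain ⟨R1', hR1', hl12⟩ := lmon_eq (a 2) z1 hz1
    obtain ⟨R2', hR2', hl13⟩ := lmon_eq (a 3) z1 hz1
    obtain ⟨S0, hS0, hl21⟩ := lmon_eq (a 1) z2 hz2
    obtain ⟨S1, hS1, hl22⟩ := lmon_eq (a 2) z2 hz2
    obtain ⟨S2, hS2, hl23⟩ := lmon_eq (a 3) z2 hz2
    obtain ⟨T0, hT0, hlgi⟩ := lmon_eq ((M i).2) zg hzg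
    obtain ⟨T1, hT1, hlgj⟩ := lmon_eq ((M j).2) zg hzg
    rw [hl10, hl12, hl13] at hz1eq
    rw [hl21, hl22, hl23, hcoh2 (a 1), hcoh2 (a 2), hcoh2 (a 3)] at hz2eq
    rw [hlgi, hlgj, hcohg ((M i).2), hcohg ((M j).2)] at hzgeq
    set E : (Fin 2 → ℤ) → ℂ :=
      fun b => Complex.exp ((∑ x, ((b x : ℤ) : ℝ) * (z1 x).arg) * Complex.I) with hEdef
    have hEne : ∀ b, E b ≠ 0 := fun b => Complex.exp_ne_zero _
    have h1 : f₁ * ((R0:ℂ) * E (a 0)) + (R1':ℂ) * E (a 2) + (f₂:ℂ) * ((R2':ℂ) * E (a 3)) = 0 :=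
      hz1eq
    have h2 : f₃ * ((S0:ℂ) * E (a 1)) + (S1:ℂ) * E (a 2) + (f₄:ℂ) * ((S2:ℂ) * E (a 3)) = 0 :=
      hz2eq
    have hg2 : ε * (M i).1 * ((T0:ℂ) * E ((M i).2))
        + ε' * (M j).1 * ((T1:ℂ) * E ((M j).2)) = 0 := hzgeq
    have hinv : (f₄:ℂ) / (f₂:ℂ) * (f₂:ℂ) = (f₄:ℂ) := div_mul_cancel₀ _ hf₂'
    have hAne : f₁ * E (a 0) ≠ 0 := mul_ne_zero hf₁ (hEne _)
    have hBne : (1:ℂ) * E (a 2) ≠ 0 := by rw [one_mul]; exact hEne _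
    have hCne : (f₂:ℂ) * E (a 3) ≠ 0 := mul_ne_zero hf₂' (hEne _)
    have hA'ne : f₃ * E (a 1) ≠ 0 := mul_ne_zero hf₃ (hEne _)
    have hC'ne : (f₄:ℂ) * E (a 3) ≠ 0 := mul_ne_zero hf₄' (hEne _)
    have hc2 : S2 * (f₄ / f₂) ≠ 0 := mul_ne_zero hS2.ne' (div_ne_zero hf₄ hf₂)
    have rel2C : ((S2 * (f₄ / f₂) : ℝ):ℂ) * ((f₂:ℂ) * E (a 3)) + (S0:ℂ) * (f₃ * E (a 1))
        + (S1:ℂ) * ((1:ℂ) * E (a 2)) = 0 := by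
      push_cast
      linear_combination h2 + (S2:ℂ) * E (a 3) * hinv
    have hCC : (f₂:ℂ) * E (a 3) = ((1:ℝ):ℂ) * ((f₂:ℂ) * E (a 3)) := by push_cast; ring
    have hC'C : (f₄:ℂ) * E (a 3) = ((f₄ / f₂ : ℝ):ℂ) * ((f₂:ℂ) * E (a 3)) := by
      push_cast
      linear_combination - E (a 3) * hinv
    have hBC : (∃ u : ℝ, (1:ℂ) * E (a 2) = (u:ℂ) * ((f₂:ℂ) * E (a 3))) → False := by
      rintro ⟨u, hu⟩
      have hA : ∃ v : ℝ, f₁ * E (a 0) = (v:ℂ) * ((f₂:ℂ) * E (a 3)) := by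
        refine solve3 _ ((1:ℂ) * E (a 2)) ((f₂:ℂ) * E (a 3)) _ R0 R1' R2' hR0.ne' ?_
          ⟨u, hu⟩ ⟨1, hCC⟩
        push_cast
        linear_combination h1
      have hA' : ∃ v : ℝ, f₃ * E (a 1) = (v:ℂ) * ((f₂:ℂ) * E (a 3)) := by
        refine solve3 _ ((1:ℂ) * E (a 2)) ((f₂:ℂ) * E (a 3)) _ S0 S1 (S2 * (f₄ / f₂))
          hS0.ne' ?_ ⟨u, hu⟩ ⟨1, hCC⟩
        linear_combination rel2C
      obtain ⟨vA, hvA⟩ := hA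
      obtain ⟨vA', hvA'⟩ := hA'
      refine hnonreal (fun x => (z1 x).arg) ⟨⟨(f₂:ℂ) * E (a 3), hCne, ?_⟩,
        ⟨(f₂:ℂ) * E (a 3), hCne, ?_⟩⟩
      · intro mm hmm
        simp only [List.mem_cons, List.not_mem_nil, or_false] at hmm
        rcases hmm with rfl | rfl | rfl
        · exact ⟨vA, hvA⟩
        · exact ⟨u, hu⟩
        · exact ⟨1, hCC⟩
      · intro mm hmm
        simp only [List.mem_cons, List.not_mem_nil, or_false] at hmm
        rcases hmm with rfl | rfl | rfl
        · exact ⟨vA', hvA'⟩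
        · exact ⟨u, hu⟩
        · exact ⟨f₄ / f₂, hC'C⟩
    have hCB : (∃ u : ℝ, (f₂:ℂ) * E (a 3) = (u:ℂ) * ((1:ℂ) * E (a 2))) → False :=
      fun h => hBC (col_symm _ _ hCne h)
    have hAB : (∃ u : ℝ, f₁ * E (a 0) = (u:ℂ) * ((1:ℂ) * E (a 2))) → False := by
      rintro ⟨u, hu⟩
      refine hCB (solve3 _ (f₁ * E (a 0)) ((1:ℂ) * E (a 2)) _ R2' R0 R1' hR2'.ne' ?_
        ⟨u, hu⟩ ⟨1, by push_cast; ring⟩)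
      push_cast
      linear_combination h1
    have hBA : (∃ u : ℝ, (1:ℂ) * E (a 2) = (u:ℂ) * (f₁ * E (a 0))) → False :=
      fun h => hAB (col_symm _ _ hBne h)
    have hAC : (∃ u : ℝ, f₁ * E (a 0) = (u:ℂ) * ((f₂:ℂ) * E (a 3))) → False := by
      rintro ⟨u, hu⟩
      refine hBC (solve3 _ (f₁ * E (a 0)) ((f₂:ℂ) * E (a 3)) _ R1' R0 R2' hR1'.ne' ?_
        ⟨u, hu⟩ ⟨1, hCC⟩)
      push_cast
      linear_combination h1
    have hCA : (∃ u : ℝ, (f₂:ℂ) * E (a 3) = (u:ℂ) * (f₁ * E (a 0))) → False :=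
      fun h => hAC (col_symm _ _ hCne h)
    have hA'B : (∃ u : ℝ, f₃ * E (a 1) = (u:ℂ) * ((1:ℂ) * E (a 2))) → False := by
      rintro ⟨u, hu⟩
      refine hCB (solve3 _ (f₃ * E (a 1)) ((1:ℂ) * E (a 2)) _ (S2 * (f₄ / f₂)) S0 S1 hc2 ?_
        ⟨u, hu⟩ ⟨1, by push_cast; ring⟩)
      linear_combination rel2C
    have hBA' : (∃ u : ℝ, (1:ℂ) * E (a 2) = (u:ℂ) * (f₃ * E (a 1))) → False :=
      fun h => hA'B (col_symm _ _ hBne h)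
    have hA'C : (∃ u : ℝ, f₃ * E (a 1) = (u:ℂ) * ((f₂:ℂ) * E (a 3))) → False := by
      rintro ⟨u, hu⟩
      refine hBC (solve3 _ (f₃ * E (a 1)) ((f₂:ℂ) * E (a 3)) _ S1 S0 (S2 * (f₄ / f₂))
        hS1.ne' ?_ ⟨u, hu⟩ ⟨1, hCC⟩)
      linear_combination rel2C
    have hCA' : (∃ u : ℝ, (f₂:ℂ) * E (a 3) = (u:ℂ) * (f₃ * E (a 1))) → False :=
      fun h => hA'C (col_symm _ _ hCne h)
    have hconv : ∀ (X : ℂ), (∃ u : ℝ, X = (u:ℂ) * ((f₄:ℂ) * E (a 3))) →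
        ∃ v : ℝ, X = (v:ℂ) * ((f₂:ℂ) * E (a 3)) := by
      rintro X ⟨u, hu⟩
      refine ⟨u * (f₄ / f₂), ?_⟩
      push_cast
      linear_combination hu - (u:ℂ) * E (a 3) * hinv
    have hAC' : (∃ u : ℝ, f₁ * E (a 0) = (u:ℂ) * ((f₄:ℂ) * E (a 3))) → False :=
      fun h => hAC (hconv _ h)
    have hC'A : (∃ u : ℝ, (f₄:ℂ) * E (a 3) = (u:ℂ) * (f₁ * E (a 0))) → False :=
      fun h => hAC' (col_symm _ _ hC'ne h)
    have hBC' : (∃ u : ℝ, (1:ℂ) * E (a 2) = (u:ℂ) * ((f₄:ℂ) * E (a 3))) → False :=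
      fun h => hBC (hconv _ h)
    have hC'B : (∃ u : ℝ, (f₄:ℂ) * E (a 3) = (u:ℂ) * ((1:ℂ) * E (a 2))) → False :=
      fun h => hBC' (col_symm _ _ hC'ne h)
    have hA'C' : (∃ u : ℝ, f₃ * E (a 1) = (u:ℂ) * ((f₄:ℂ) * E (a 3))) → False :=
      fun h => hA'C (hconv _ h)
    have hC'A' : (∃ u : ℝ, (f₄:ℂ) * E (a 3) = (u:ℂ) * (f₃ * E (a 1))) → False :=
      fun h => hA'C' (col_symm _ _ hC'ne h)
    have hT0' : (T0:ℂ) ≠ 0 := Complex.ofReal_ne_zero.mpr hT0.ne'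
    have hT1' : (T1:ℂ) ≠ 0 := Complex.ofReal_ne_zero.mpr hT1.ne'
    have hT0inv : (T0:ℂ) * (T0:ℂ)⁻¹ = 1 := mul_inv_cancel₀ hT0'
    have hgcol : ∃ t : ℝ, ((M i).1 * E ((M i).2) = (t:ℂ) * ((M j).1 * E ((M j).2))) ∧
        (0 < t → (ε = 1 ∧ ε' = -1) ∨ (ε = -1 ∧ ε' = 1)) := by
      rcases hε with rfl | rfl <;> rcases hε' with rfl | rfl
      · refine ⟨-(T1 / T0), ?_, fun h => absurd h (by intro h2; nlinarith [div_pos hT1 hT0])⟩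
        push_cast
        linear_combination (T0:ℂ)⁻¹ * hg2 - (M i).1 * E ((M i).2) * hT0inv
      · refine ⟨T1 / T0, ?_, fun _ => Or.inl ⟨rfl, rfl⟩⟩
        push_cast
        linear_combination (T0:ℂ)⁻¹ * hg2 - (M i).1 * E ((M i).2) * hT0inv
      · refine ⟨T1 / T0, ?_, fun _ => Or.inr ⟨rfl, rfl⟩⟩
        push_cast
        linear_combination - (T0:ℂ)⁻¹ * hg2 - (M i).1 * E ((M i).2) * hT0inv
      · refine ⟨-(T1 / T0), ?_, fun h => absurd h (by intro h2; nlinarith [div_pos hT1 hT0])⟩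
        push_cast
        linear_combination - (T0:ℂ)⁻¹ * hg2 - (M i).1 * E ((M i).2) * hT0inv
    have rel1' : (R0:ℂ) * (f₁ * E (a 0)) + (R1':ℂ) * ((1:ℂ) * E (a 2))
        + (R2':ℂ) * ((f₂:ℂ) * E (a 3)) = 0 := by push_cast; linear_combination h1
    have rel2' : (S0:ℂ) * (f₃ * E (a 1)) + (S1:ℂ) * ((1:ℂ) * E (a 2))
        + ((S2 * (f₄ / f₂) : ℝ):ℂ) * ((f₂:ℂ) * E (a 3)) = 0 := by linear_combination rel2C
    clear hz1eq hz2eq hzgeq hz1eq' hz2eq' hl10 hl12 hl13 hl21 hl22 hl23 hlgi hlgj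
    clear hcoh2 hcohg h1 h2 hθ1 hθ2 hθg hz1 hz2 hzg rel2C hCC hC'C hconv hinv hT0inv
    clear hLfdef ha hnonreal θT z2 zg
    have h6 : ∀ k : Fin 6, k = 0 ∨ k = 1 ∨ k = 2 ∨ k = 3 ∨ k = 4 ∨ k = 5 := by decide
    rcases h6 i with rfl | rfl | rfl | rfl | rfl | rfl <;>
      rcases h6 j with rfl | rfl | rfl | rfl | rfl | rfl
    -- i = 0
    · exact absurd rfl hne
    · obtain ⟨t, hcol, -⟩ := hgcol
      rw [hM0, hM1] at hcol
      exact absurd ⟨t, hcol⟩ hAB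
    · obtain ⟨t, hcol, -⟩ := hgcol
      rw [hM0, hM2] at hcol
      exact absurd ⟨t, hcol⟩ hAC
    · -- hard case (0,3)
      obtain ⟨t, hcol, hsign⟩ := hgcol
      rw [hM0, hM3] at hcol
      have hcol' : f₁ * E (a 0) = (t:ℂ) * (f₃ * E (a 1)) := hcol
      have ht0 : t ≠ 0 := by
        rintro rfl
        rw [Complex.ofReal_zero, zero_mul] at hcol'
        exact hAne hcol'
      have htC : (t:ℂ) ≠ 0 := Complex.ofReal_ne_zero.mpr ht0
      have htinv : (t:ℂ) * (t:ℂ)⁻¹ = 1 := mul_inv_cancel₀ htC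
      have hcolinv : f₃ * E (a 1) = ((t⁻¹ : ℝ):ℂ) * (f₁ * E (a 0)) := by
        push_cast
        linear_combination - (t:ℂ)⁻¹ * hcol' - (f₃ * E (a 1)) * htinv
      rcases hardCase (f₁ * E (a 0)) ((1:ℂ) * E (a 2)) ((f₂:ℂ) * E (a 3)) (f₃ * E (a 1))
          hCne R0 R1' R2' hR0 hR1' hR2' rel1' S0 S1 (S2 * (f₄ / f₂)) hS0 hS1 rel2'
          t⁻¹ hcolinv with hcl | ⟨htpos, hc2pos⟩
      · exact absurd hcl hBC
      · have hq : 0 < f₄ / f₂ := by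
          by_contra hq'
          push_neg at hq'
          nlinarith [hc2pos, mul_nonneg hS2.le (neg_nonneg.mpr hq')]
        have hff : 0 < f₂ * f₄ := by
          have h9 : f₂ * f₄ = (f₄ / f₂) * f₂ ^ 2 := by field_simp
          rw [h9]; positivity
        refine ⟨hff, ?_⟩
        rcases hsign (inv_pos.mp htpos) with ⟨rfl, rfl⟩ | ⟨rfl, rfl⟩
        · left
          intro z
          simp only [hgdef, hM0, hM3]
          ring
        · right
          intro z
          simp only [hgdef, hM0, hM3]
          ring
    · obtain ⟨t, hcol, -⟩ := hgcol
      rw [hM0, hM4] at hcol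
      exact absurd ⟨t, hcol⟩ hAB
    · obtain ⟨t, hcol, -⟩ := hgcol
      rw [hM0, hM5] at hcol
      exact absurd ⟨t, hcol⟩ hAC'
    -- i = 1
    · obtain ⟨t, hcol, -⟩ := hgcol
      rw [hM1, hM0] at hcol
      exact absurd ⟨t, hcol⟩ hBA
    · exact absurd rfl hne
    · obtain ⟨t, hcol, -⟩ := hgcol
      rw [hM1, hM2] at hcol
      exact absurd ⟨t, hcol⟩ hBC
    · obtain ⟨t, hcol, -⟩ := hgcol
      rw [hM1, hM3] at hcol
      exact absurd ⟨t, hcol⟩ hBA'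
    · exact absurd (by rw [hM1, hM4]) hne
    · obtain ⟨t, hcol, -⟩ := hgcol
      rw [hM1, hM5] at hcol
      exact absurd ⟨t, hcol⟩ hBC'
    -- i = 2
    · obtain ⟨t, hcol, -⟩ := hgcol
      rw [hM2, hM0] at hcol
      exact absurd ⟨t, hcol⟩ hCA
    · obtain ⟨t, hcol, -⟩ := hgcol
      rw [hM2, hM1] at hcol
      exact absurd ⟨t, hcol⟩ hCB
    · exact absurd rfl hne
    · obtain ⟨t, hcol, -⟩ := hgcol
      rw [hM2, hM3] at hcol
      exact absurd ⟨t, hcol⟩ hCA'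
    · obtain ⟨t, hcol, -⟩ := hgcol
      rw [hM2, hM4] at hcol
      exact absurd ⟨t, hcol⟩ hCB
    · exact absurd (by rw [hM2, hM5]) hne
    -- i = 3
    · -- hard case (3,0)
      obtain ⟨t, hcol, hsign⟩ := hgcol
      rw [hM3, hM0] at hcol
      have hcol' : f₃ * E (a 1) = (t:ℂ) * (f₁ * E (a 0)) := hcol
      rcases hardCase (f₁ * E (a 0)) ((1:ℂ) * E (a 2)) ((f₂:ℂ) * E (a 3)) (f₃ * E (a 1))
          hCne R0 R1' R2' hR0 hR1' hR2' rel1' S0 S1 (S2 * (f₄ / f₂)) hS0 hS1 rel2'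
          t hcol' with hcl | ⟨htpos, hc2pos⟩
      · exact absurd hcl hBC
      · have hq : 0 < f₄ / f₂ := by
          by_contra hq'
          push_neg at hq'
          nlinarith [hc2pos, mul_nonneg hS2.le (neg_nonneg.mpr hq')]
        have hff : 0 < f₂ * f₄ := by
          have h9 : f₂ * f₄ = (f₄ / f₂) * f₂ ^ 2 := by field_simp
          rw [h9]; positivity
        refine ⟨hff, ?_⟩
        rcases hsign htpos with ⟨rfl, rfl⟩ | ⟨rfl, rfl⟩
        · right
          intro z
          simp only [hgdef, hM0, hM3]
          ring
        · left
          intro z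
          simp only [hgdef, hM0, hM3]
          ring
    · obtain ⟨t, hcol, -⟩ := hgcol
      rw [hM3, hM1] at hcol
      exact absurd ⟨t, hcol⟩ hA'B
    · obtain ⟨t, hcol, -⟩ := hgcol
      rw [hM3, hM2] at hcol
      exact absurd ⟨t, hcol⟩ hA'C
    · exact absurd rfl hne
    · obtain ⟨t, hcol, -⟩ := hgcol
      rw [hM3, hM4] at hcol
      exact absurd ⟨t, hcol⟩ hA'B
    · obtain ⟨t, hcol, -⟩ := hgcol
      rw [hM3, hM5] at hcol
      exact absurd ⟨t, hcol⟩ hA'C'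
    -- i = 4
    · obtain ⟨t, hcol, -⟩ := hgcol
      rw [hM4, hM0] at hcol
      exact absurd ⟨t, hcol⟩ hBA
    · exact absurd (by rw [hM4, hM1]) hne
    · obtain ⟨t, hcol, -⟩ := hgcol
      rw [hM4, hM2] at hcol
      exact absurd ⟨t, hcol⟩ hBC
    · obtain ⟨t, hcol, -⟩ := hgcol
      rw [hM4, hM3] at hcol
      exact absurd ⟨t, hcol⟩ hBA'
    · exact absurd rfl hne
    · obtain ⟨t, hcol, -⟩ := hgcol
      rw [hM4, hM5] at hcol
      exact absurd ⟨t, hcol⟩ hBC'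
    -- i = 5
    · obtain ⟨t, hcol, -⟩ := hgcol
      rw [hM5, hM0] at hcol
      exact absurd ⟨t, hcol⟩ hC'A
    · obtain ⟨t, hcol, -⟩ := hgcol
      rw [hM5, hM1] at hcol
      exact absurd ⟨t, hcol⟩ hC'B
    · exact absurd (by rw [hM5, hM2]) hne
    · obtain ⟨t, hcol, -⟩ := hgcol
      rw [hM5, hM3] at hcol
      exact absurd ⟨t, hcol⟩ hC'A'
    · obtain ⟨t, hcol, -⟩ := hgcol
      rw [hM5, hM4] at hcol
      exact absurd ⟨t, hcol⟩ hC'B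
    · exact absurd rfl hne
  constructor
  · intro hlt
    rw [Set.disjoint_left]
    intro θT hgθ hLθ
    have := (main θT hgθ hLθ).1
    linarith
  · intro hpos hexc
    rw [Set.disjoint_left]
    intro θT hgθ hLθ
    exact hexc (main θT hgθ hLθ).2
end
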